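/- arXiv:2406.05523 — 3 statements merged into one kernel-verified Lean document; each statement's English description precedes it below -/
import Mathlib

section
/- Let R > 1, let 0 < ε < 1/4, and let y : ℝ → (0,1] be measurable. Then ∫₀¹ #{ coprime pairs (c,d) ∈ ℤ² with c ≥ 1, together with (c,d) = (0,1), such that y_{c,d}(x + i·y(x))^{1/4} > R · y(x)^{−ε} } dx ≤ 2 · (ζ(2/(1−4ε) − 1)/ζ(2/(1−4ε))) · R^{−4}, where ζ denotes the Riemann zeta function (note 2/(1−4ε) > 2, so both zeta values are finite and positive). -/
open MeasureTheory Filter Topology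
open scoped ENNReal

/-- `y_{c,d}(x + iy) = y / ((cx+d)² + c²y²)`, the imaginary part of `γ(x+iy)` for
`γ ∈ SL(2,ℤ)` with bottom row `(c,d)`. -/
noncomputable def ycd (c d : ℤ) (x Y : ℝ) : ℝ :=
  Y / (((c : ℝ) * x + (d : ℝ)) ^ 2 + (c : ℝ) ^ 2 * Y ^ 2)

/-- The parametrization of `Γ_∞\PSL(2,ℤ)`: coprime pairs `(c,d)` with `c ≥ 1`,
together with `(c,d) = (0,1)`. -/
def cuspIdx (q : ℤ × ℤ) : Prop := (1 ≤ q.1 ∧ IsCoprime q.1 q.2) ∨ q = (0, 1)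

section Aux

lemma ncard_le_tsum_indicator {α : Type*} (S : Set α) :
    (S.ncard : ℝ≥0∞) ≤ ∑' a, S.indicator (fun _ => (1:ℝ≥0∞)) a := by
  classical
  by_cases hS : S.Finite
  · calc (S.ncard : ℝ≥0∞) = (hS.toFinset.card : ℝ≥0∞) := by
          rw [Set.ncard_eq_toFinset_card _ hS]
      _ = ∑ a ∈ hS.toFinset, S.indicator (fun _ => (1:ℝ≥0∞)) a := by
          rw [Finset.sum_congr rfl
            (fun a ha => Set.indicator_of_mem (hS.mem_toFinset.mp ha) (fun _ => (1:ℝ≥0∞)))]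
          simp
      _ ≤ _ := ENNReal.sum_le_tsum _
  · rw [Set.Infinite.ncard hS]
    simp

open scoped Classical in
lemma coprime_card_le (c : ℤ) (hc : 2 ≤ c) :
    ((Finset.Icc (-c) 0).filter (fun d => IsCoprime c d)).card ≤ Nat.totient c.toNat := by
  classical
  rw [Nat.totient]
  apply Finset.card_le_card_of_injOn (fun d => (d + c).toNat)
  · intro d hd
    simp only [Finset.mem_coe, Finset.mem_filter, Finset.mem_Icc] at hd
    obtain ⟨⟨hd1, hd2⟩, hcop⟩ := hd
    have hd0 : d ≠ 0 := by
      rintro rfl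
      have := isCoprime_zero_right.mp hcop
      rcases Int.isUnit_iff.mp this with h | h <;> omega
    have hdc : d ≠ -c := by
      rintro rfl
      have : IsCoprime c c := by
        have := hcop.neg_right
        simpa using this
      have := isCoprime_self.mp this
      rcases Int.isUnit_iff.mp this with h | h <;> omega
    simp only [Finset.mem_coe, Finset.mem_filter, Finset.mem_range]
    constructor
    · omega
    · have h1 : Nat.gcd c.toNat (d + c).toNat = Int.gcd c (d + c) := by
        unfold Int.gcd
        congr 1 <;> omega
      have h2 : IsCoprime c (d + c) := by
        have := hcop.add_mul_left_right 1
        simpa using this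
      have h3 : Int.gcd c (d + c) = 1 := Int.isCoprime_iff_gcd_eq_one.mp h2
      unfold Nat.Coprime
      omega
  · intro a ha b hb hab
    simp only [Finset.mem_coe, Finset.mem_filter, Finset.mem_Icc] at ha hb
    have hab' : (a + c).toNat = (b + c).toNat := hab
    omega

lemma key_ineq {R ε x Y : ℝ} {c : ℤ} (d : ℤ) (hR : 1 < R) (hε0 : 0 < ε) (hε : ε < 1/4)
    (hY0 : 0 < Y) (hY1 : Y ≤ 1) (hc : 1 ≤ c)
    (h : R * Y ^ (-ε) < (ycd c d x Y) ^ ((1:ℝ)/4)) :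
    |(c:ℝ) * x + (d:ℝ)| < (c:ℝ) ^ (1 - 2/(1-4*ε)) * R ^ (-(2*(2/(1-4*ε)))) := by
  have h1a : (0:ℝ) < 1 - 4*ε := by linarith
  have hcR : (1:ℝ) ≤ (c:ℝ) := by exact_mod_cast hc
  have hcR0 : (0:ℝ) < (c:ℝ) := by linarith
  have hR0 : (0:ℝ) < R := by linarith
  set u : ℝ := (c:ℝ) * x + (d:ℝ) with hu
  set Q : ℝ := u ^ 2 + (c:ℝ) ^ 2 * Y ^ 2 with hQdef
  have hc2Y : 0 < (c:ℝ)^2 * Y^2 := by positivity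
  have hQ : 0 < Q := by positivity
  have hL : 0 < R * Y ^ (-ε) := mul_pos hR0 (Real.rpow_pos_of_pos hY0 _)
  have h4 : (R * Y ^ (-ε))^(4:ℕ) < Y / Q := by
    have := pow_lt_pow_left₀ h hL.le (by norm_num : (4:ℕ) ≠ 0)
    calc (R * Y ^ (-ε))^(4:ℕ) < ((ycd c d x Y) ^ ((1:ℝ)/4))^(4:ℕ) := this
      _ = Y / Q := by
          rw [← Real.rpow_natCast ((ycd c d x Y) ^ ((1:ℝ)/4)) 4,
            ← Real.rpow_mul (by unfold ycd; positivity)]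
          norm_num [ycd]
          rfl
  have h4' : R^(4:ℕ) * Y ^ (-ε*4) < Y / Q := by
    calc R^(4:ℕ) * Y ^ (-ε*4) = (R * Y ^ (-ε))^(4:ℕ) := by
          rw [mul_pow, ← Real.rpow_natCast (Y ^ (-ε)) 4, ← Real.rpow_mul hY0.le]
          norm_num
      _ < Y / Q := h4
  set M : ℝ := Y ^ (1+4*ε) / R^(4:ℕ) with hM
  have hA : 0 < R^(4:ℕ) * Y ^ (-ε*4) := by positivity
  have hQM : Q < M := by
    have h5 : (R^(4:ℕ) * Y ^ (-ε*4)) * Q < Y := (lt_div_iff₀ hQ).mp h4'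
    have h6 : Y = (R^(4:ℕ) * Y ^ (-ε*4)) * M := by
      rw [hM, div_eq_mul_inv,
        show R^(4:ℕ) * Y ^ (-ε*4) * (Y ^ (1+4*ε) * (R^(4:ℕ))⁻¹)
          = (Y ^ (-ε*4) * Y ^ (1+4*ε)) * (R^(4:ℕ) * (R^(4:ℕ))⁻¹) by ring,
        ← Real.rpow_add hY0, mul_inv_cancel₀ (by positivity : R^(4:ℕ) ≠ 0), mul_one,
        show -ε*4 + (1+4*ε) = 1 by ring, Real.rpow_one]
    have h5' : (R^(4:ℕ) * Y ^ (-ε*4)) * Q < (R^(4:ℕ) * Y ^ (-ε*4)) * M := by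
      calc (R^(4:ℕ) * Y ^ (-ε*4)) * Q < Y := h5
        _ = _ := h6
    exact lt_of_mul_lt_mul_left h5' hA.le
  have h1 : u^2 < M := by nlinarith [hQM, hc2Y]
  have h2 : (c:ℝ)^2 * Y^2 < M := by nlinarith [hQM, sq_nonneg u]
  have hYb : Y ^ (1-4*ε) < ((c:ℝ)^2 * R^(4:ℕ))⁻¹ := by
    have hlt : (c:ℝ)^2 * R^(4:ℕ) < Y ^ (4*ε-1) := by
      have h2' : (c:ℝ)^2 * R^(4:ℕ) * Y^2 < Y ^ (1+4*ε) := by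
        rw [hM] at h2
        rw [lt_div_iff₀ (by positivity)] at h2
        nlinarith [h2]
      have hY2 : Y ^ (1+4*ε) / Y^(2:ℕ) = Y ^ (4*ε-1) := by
        rw [← Real.rpow_natCast Y 2, ← Real.rpow_sub hY0]
        norm_num
        ring_nf
      rw [← hY2]
      rw [lt_div_iff₀ (by positivity)]
      nlinarith [h2']
    have := inv_strictAnti₀ (by positivity : (0:ℝ) < (c:ℝ)^2 * R^(4:ℕ)) hlt
    rwa [← Real.rpow_neg hY0.le, neg_sub] at this
  set t : ℝ := (1+4*ε)/(2*(1-4*ε)) with ht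
  have ht0 : 0 < t := by positivity
  have h3 : Y ^ ((1+4*ε)/2) < (((c:ℝ)^2 * R^(4:ℕ))⁻¹) ^ t := by
    have := Real.rpow_lt_rpow (Real.rpow_nonneg hY0.le _) hYb ht0
    rwa [← Real.rpow_mul hY0.le,
      show (1-4*ε)*t = (1+4*ε)/2 by rw [ht]; field_simp] at this
  have hB : |u| < Y ^ ((1+4*ε)/2) / R^(2:ℕ) := by
    apply abs_lt_of_sq_lt_sq _ (by positivity)
    rw [div_pow, ← Real.rpow_natCast (Y ^ ((1+4*ε)/2)) 2, ← Real.rpow_mul hY0.le]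
    calc u^2 < M := h1
      _ = Y ^ ((1+4*ε)/2*2) / (R^(2:ℕ))^(2:ℕ) := by rw [hM]; norm_num; ring_nf
  have hfinal : Y ^ ((1+4*ε)/2) / R^(2:ℕ) < (((c:ℝ)^2 * R^(4:ℕ))⁻¹) ^ t / R^(2:ℕ) := by
    gcongr
  have heq : (((c:ℝ)^2 * R^(4:ℕ))⁻¹) ^ t / R^(2:ℕ)
      = (c:ℝ) ^ (1 - 2/(1-4*ε)) * R ^ (-(2*(2/(1-4*ε)))) := by
    rw [mul_inv, ← Real.rpow_natCast ((c:ℝ)) 2, ← Real.rpow_natCast R 4,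
      ← Real.rpow_natCast R 2,
      ← Real.rpow_neg hcR0.le, ← Real.rpow_neg hR0.le,
      Real.mul_rpow (Real.rpow_nonneg hcR0.le _) (Real.rpow_nonneg hR0.le _),
      ← Real.rpow_mul hcR0.le, ← Real.rpow_mul hR0.le, div_eq_mul_inv,
      ← Real.rpow_neg hR0.le, mul_assoc, ← Real.rpow_add hR0]
    have e1 : -(2:ℕ) * t = 1 - 2/(1-4*ε) := by
      push_cast; rw [ht]; field_simp; ring
    have e2 : -(4:ℕ) * t + -(2:ℕ) = -(2*(2/(1-4*ε))) := by
      push_cast; rw [ht]; field_simp; ring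
    rw [e1, e2]
  calc |u| < Y ^ ((1+4*ε)/2) / R^(2:ℕ) := hB
    _ < (((c:ℝ)^2 * R^(4:ℕ))⁻¹) ^ t / R^(2:ℕ) := hfinal
    _ = _ := heq

open Complex LSeries in
open scoped LSeries.notation in
lemma totient_summable {σ : ℝ} (hσ : 2 < σ) :
    Summable (fun n : ℕ => (Nat.totient n : ℝ) / (n : ℝ) ^ σ) := by
  have hg : Summable (fun n : ℕ => 1 / (n : ℝ) ^ (σ - 1)) :=
    (Real.summable_one_div_nat_rpow).mpr (by linarith)
  refine Summable.of_nonneg_of_le (fun n => by positivity) (fun n => ?_) hg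
  rcases Nat.eq_zero_or_pos n with rfl | hn
  · simpa using Real.rpow_nonneg le_rfl (σ-1)
  · have hn0 : (0:ℝ) < n := by exact_mod_cast hn
    rw [div_le_div_iff₀ (by positivity) (by positivity)]
    calc (Nat.totient n : ℝ) * (n:ℝ) ^ (σ - 1) ≤ (n:ℝ) * (n:ℝ) ^ (σ-1) := by
          gcongr; exact_mod_cast Nat.totient_le n
      _ = (n:ℝ) ^ (1:ℝ) * (n:ℝ)^(σ-1) := by rw [Real.rpow_one]
      _ = 1 * (n:ℝ) ^ σ := by rw [← Real.rpow_add hn0]; ring_nf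

open Complex LSeries in
open scoped LSeries.notation in
lemma totient_LSeries {σ : ℝ} (hσ : 2 < σ) :
    riemannZeta ((σ:ℂ) - 1) / riemannZeta (σ:ℂ)
      = ((∑' n : ℕ, (Nat.totient n : ℝ) / (n : ℝ) ^ σ : ℝ) : ℂ) := by
  have hσ1 : 1 < ((σ:ℂ)).re := by simp; linarith
  have hσ1' : 1 < ((σ:ℂ) - 1).re := by simp [Complex.sub_re]; linarith
  set f : ℕ → ℂ := fun n => (Nat.totient n : ℂ) with hf
  have hfs : LSeriesSummable f (σ:ℂ) := by
    apply LSeriesSummable_of_le_const_mul_rpow (x := 2) (by simpa using hσ)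
    refine ⟨1, fun n hn => ?_⟩
    rw [show (2:ℝ) - 1 = 1 by ring, Real.rpow_one, one_mul]
    simpa [hf] using (by exact_mod_cast Nat.totient_le n : (Nat.totient n : ℝ) ≤ n)
  have h1 : LSeriesSummable 1 (σ:ℂ) := LSeriesSummable_one_iff.mpr hσ1
  have hconv : (1 : ℕ → ℂ) ⍟ f = fun n : ℕ => (n : ℂ) := by
    funext n
    rcases Nat.eq_zero_or_pos n with rfl | hn
    · simp
    · rw [LSeries.convolution_def]
      simp only [Pi.one_apply, one_mul]
      rw [Nat.sum_divisorsAntidiagonal' (f := fun _ d => f d)]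
      simp only [hf]
      rw [← Nat.cast_sum]
      exact_mod_cast congrArg (Nat.cast : ℕ → ℂ) (Nat.sum_totient n)
  have hid : LSeries (fun n : ℕ => (n:ℂ)) (σ:ℂ) = riemannZeta ((σ:ℂ) - 1) := by
    rw [zeta_eq_tsum_one_div_nat_cpow hσ1']
    apply tsum_congr
    intro n
    rcases Nat.eq_zero_or_pos n with rfl | hn
    · rw [term_zero]
      rw [Nat.cast_zero, Complex.zero_cpow (by
        intro h
        have := congrArg Complex.re h
        simp [Complex.sub_re] at this
        linarith), div_zero]
    · rw [term_of_ne_zero hn.ne']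
      have hn0 : (n:ℂ) ≠ 0 := Nat.cast_ne_zero.mpr hn.ne'
      rw [Complex.cpow_sub _ _ hn0, Complex.cpow_one]
      field_simp
  have hmul := LSeries_convolution' h1 hfs
  rw [hconv, hid] at hmul
  rw [LSeries_one_eq_riemannZeta hσ1] at hmul
  have hz : riemannZeta (σ:ℂ) ≠ 0 := riemannZeta_ne_zero_of_one_lt_re hσ1
  have hLf : LSeries f (σ:ℂ) = ((∑' n : ℕ, (Nat.totient n : ℝ) / (n : ℝ) ^ σ : ℝ) : ℂ) := by
    rw [Complex.ofReal_tsum]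
    apply tsum_congr
    intro n
    rcases Nat.eq_zero_or_pos n with rfl | hn
    · simp [term_zero]
    · rw [term_of_ne_zero hn.ne']
      rw [Complex.ofReal_div, Complex.ofReal_cpow (Nat.cast_nonneg n)]
      push_cast
      ring
  rw [hLf] at hmul
  rw [hmul, mul_comm, mul_div_assoc, div_self hz, mul_one]

end Aux

theorem statement4 (R ε : ℝ) (hR : 1 < R) (hε0 : 0 < ε) (hε : ε < 1 / 4)
    (y : ℝ → ℝ) (hy : Measurable y) (hy01 : ∀ x, y x ∈ Set.Ioc (0 : ℝ) 1) :
    ∫⁻ x in Set.Ioo (0 : ℝ) 1,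
      (({q : ℤ × ℤ | cuspIdx q ∧
          R * (y x) ^ (-ε) < (ycd q.1 q.2 x (y x)) ^ ((1 : ℝ) / 4)}.ncard : ℝ≥0∞))
      ≤ ENNReal.ofReal
          (2 * ((riemannZeta ((2 : ℂ) / (1 - 4 * (ε : ℂ)) - 1)) /
                 (riemannZeta ((2 : ℂ) / (1 - 4 * (ε : ℂ))))).re * R ^ (-(4 : ℝ))) := by
  classical
  have h1a : (0:ℝ) < 1 - 4*ε := by linarith
  have hR0 : (0:ℝ) < R := by linarith
  set s : ℝ := 2/(1-4*ε) with hs_def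
  have hs2 : 2 < s := by
    rw [hs_def, lt_div_iff₀ h1a]; nlinarith
  set A : ℤ × ℤ → Set ℝ := fun q =>
    {x | cuspIdx q ∧ R * (y x) ^ (-ε) < (ycd q.1 q.2 x (y x)) ^ ((1 : ℝ) / 4)} with hA
  set δ : ℤ → ℝ := fun c => (c:ℝ) ^ (1 - s) * R ^ (-(2*s)) with hδ
  have hδpos : ∀ c : ℤ, 1 ≤ c → 0 < δ c := by
    intro c hc
    have hc0 : (0:ℝ) < (c:ℝ) := by exact_mod_cast lt_of_lt_of_le one_pos hc
    exact mul_pos (Real.rpow_pos_of_pos hc0 _) (Real.rpow_pos_of_pos hR0 _)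
  have hδ1 : ∀ c : ℤ, 1 ≤ c → δ c < 1 := by
    intro c hc
    have h1c : (1:ℝ) ≤ (c:ℝ) := by exact_mod_cast hc
    calc δ c ≤ 1 * R ^ (-(2*s)) := by
          simp only [hδ]
          gcongr
          exact Real.rpow_le_one_of_one_le_of_nonpos h1c (by linarith)
      _ < 1 := by
          rw [one_mul]
          exact Real.rpow_lt_one_of_one_lt_of_neg hR (by linarith)
  -- measurability of the sets A q
  have hAm : ∀ q : ℤ × ℤ, MeasurableSet (A q) := by
    intro q
    by_cases hq : cuspIdx q
    · have hAq : A q = {x | R * (y x) ^ (-ε) < (ycd q.1 q.2 x (y x)) ^ ((1 : ℝ) / 4)} := by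
        ext x; simp [hA, hq]
      rw [hAq]
      have hden : Measurable fun x : ℝ =>
          (((q.1:ℝ)*x+(q.2:ℝ))^2 + (q.1:ℝ)^2*(y x)^2) :=
        (((measurable_const.mul measurable_id).add measurable_const).pow_const 2).add
          (measurable_const.mul (hy.pow_const 2))
      have hpos : ∀ x : ℝ, 0 < ((q.1:ℝ)*x+(q.2:ℝ))^2 + (q.1:ℝ)^2*(y x)^2 := by
        intro x
        rcases hq with ⟨hc1, _⟩ | heq
        · have hq1 : (1:ℝ) ≤ (q.1:ℝ) := by exact_mod_cast hc1
          have hyx := (hy01 x).1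
          have : 0 < (q.1:ℝ)^2*(y x)^2 := mul_pos (by nlinarith) (by positivity)
          nlinarith [sq_nonneg ((q.1:ℝ)*x+(q.2:ℝ))]
        · rw [heq]
          norm_num
      have hmeas1 : Measurable fun x : ℝ => R * (y x) ^ (-ε) := by
        have he : (fun x : ℝ => (y x) ^ (-ε))
            = fun x => Real.exp (Real.log (y x) * (-ε)) := by
          funext x; rw [Real.rpow_def_of_pos (hy01 x).1]
        exact measurable_const.mul
          (he ▸ (Real.measurable_exp.comp ((Real.measurable_log.comp hy).mul_const _)))
      have hycd_m : Measurable fun x : ℝ => ycd q.1 q.2 x (y x) := hy.div hden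
      have hmeas2 : Measurable fun x : ℝ => (ycd q.1 q.2 x (y x)) ^ ((1:ℝ)/4) := by
        have he2 : (fun x : ℝ => (ycd q.1 q.2 x (y x)) ^ ((1:ℝ)/4))
            = fun x => Real.exp (Real.log (ycd q.1 q.2 x (y x)) * ((1:ℝ)/4)) := by
          funext x
          have hpos' : 0 < ycd q.1 q.2 x (y x) := by
            unfold ycd; exact div_pos (hy01 x).1 (hpos x)
          rw [Real.rpow_def_of_pos hpos']
        exact he2 ▸ (Real.measurable_exp.comp
          ((Real.measurable_log.comp hycd_m).mul_const _))
      exact measurableSet_lt hmeas1 hmeas2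
    · have hAq : A q = ∅ := by ext x; simp [hA, hq]
      rw [hAq]; exact MeasurableSet.empty
  -- emptiness facts
  have E1 : ∀ (c d : ℤ), c ≤ 0 → A (c,d) ∩ Set.Ioo (0:ℝ) 1 = ∅ := by
    intro c d hc
    ext x
    simp only [Set.mem_inter_iff, Set.mem_empty_iff_false, iff_false, not_and]
    intro hxA hx
    obtain ⟨hcusp, hPx⟩ := hxA
    rcases hcusp with ⟨hc1, _⟩ | heq
    · simp only at hc1; omega
    · simp only [Prod.mk.injEq] at heq
      obtain ⟨rfl, rfl⟩ := heq
      have hY := hy01 x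
      have hY0 := hY.1
      have hY1 := hY.2
      have hycd : ycd 0 1 x (y x) = y x := by
        unfold ycd; norm_num
      rw [hycd] at hPx
      have hle1 : (y x)^((1:ℝ)/4) ≤ 1 := Real.rpow_le_one hY0.le hY1 (by norm_num)
      have hge1 : 1 ≤ (y x)^(-ε) := by
        apply Real.one_le_rpow_of_pos_of_le_one_of_nonpos hY0 hY1 (by linarith)
      nlinarith
  have E2 : ∀ c d : ℤ, 1 ≤ c → ¬ IsCoprime c d → A (c,d) = ∅ := by
    intro c d hc hcop
    ext x
    simp only [Set.mem_empty_iff_false, iff_false]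
    intro hxA
    obtain ⟨hcusp, _⟩ := hxA
    rcases hcusp with ⟨_, hcop'⟩ | heq
    · exact hcop hcop'
    · simp only [Prod.mk.injEq] at heq; omega
  have Ekey : ∀ c d : ℤ, 1 ≤ c → ∀ x ∈ A (c,d) ∩ Set.Ioo (0:ℝ) 1,
      |(c:ℝ)*x+(d:ℝ)| < δ c := by
    intro c d hc x hx
    obtain ⟨⟨_, hPx⟩, _⟩ := hx
    have hY := hy01 x
    have := key_ineq d hR hε0 hε hY.1 hY.2 hc hPx
    simp only [hδ]
    rw [hs_def]
    exact this
  have Evanish : ∀ c : ℤ, 1 ≤ c → ∀ d : ℤ, d ∉ Finset.Icc (-c) 0 →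
      A (c,d) ∩ Set.Ioo (0:ℝ) 1 = ∅ := by
    intro c hc d hd
    by_cases hcop : IsCoprime c d
    · ext x
      simp only [Set.mem_inter_iff, Set.mem_empty_iff_false, iff_false, not_and]
      intro hxA hx
      have hk := Ekey c d hc x ⟨hxA, hx⟩
      have hδ1' := hδ1 c hc
      have hcR : (1:ℝ) ≤ (c:ℝ) := by exact_mod_cast hc
      rw [Finset.mem_Icc] at hd
      have hdd : 1 ≤ d ∨ d ≤ -c-1 := by omega
      rcases hdd with h | h
      · have hd1 : (1:ℝ) ≤ (d:ℝ) := by exact_mod_cast h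
        have h1 : (1:ℝ) < (c:ℝ)*x + (d:ℝ) := by nlinarith [hx.1]
        have h2 : (c:ℝ)*x + (d:ℝ) ≤ |(c:ℝ)*x+(d:ℝ)| := le_abs_self _
        linarith
      · have hd1 : (d:ℝ) ≤ -(c:ℝ)-1 := by exact_mod_cast h
        have h1 : (c:ℝ)*x + (d:ℝ) < -1 := by nlinarith [hx.2]
        have h2 : -((c:ℝ)*x+(d:ℝ)) ≤ |(c:ℝ)*x+(d:ℝ)| := neg_le_abs _
        linarith
    · rw [E2 c d hc hcop, Set.empty_inter]
  -- per-pair volume bounds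
  have Ebound2 : ∀ c d : ℤ, 2 ≤ c → volume (A (c,d) ∩ Set.Ioo (0:ℝ) 1)
      ≤ (if IsCoprime c d then ENNReal.ofReal (2 * δ c / (c:ℝ)) else 0) := by
    intro c d hc2
    have hc : (1:ℤ) ≤ c := by omega
    have hc0 : (0:ℝ) < (c:ℝ) := by exact_mod_cast (by omega : (0:ℤ) < c)
    by_cases hcop : IsCoprime c d
    · rw [if_pos hcop]
      have hsub : A (c,d) ∩ Set.Ioo (0:ℝ) 1
          ⊆ Set.Ioo ((-(d:ℝ) - δ c)/(c:ℝ)) ((-(d:ℝ) + δ c)/(c:ℝ)) := by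
        intro x hx
        have hk := Ekey c d hc x hx
        rw [abs_lt] at hk
        constructor
        · rw [div_lt_iff₀ hc0]
          nlinarith [hk.1]
        · rw [lt_div_iff₀ hc0]
          nlinarith [hk.2]
      calc volume (A (c,d) ∩ Set.Ioo (0:ℝ) 1)
          ≤ volume (Set.Ioo ((-(d:ℝ) - δ c)/(c:ℝ)) ((-(d:ℝ) + δ c)/(c:ℝ))) :=
            measure_mono hsub
        _ = ENNReal.ofReal (((-(d:ℝ) + δ c)/(c:ℝ)) - ((-(d:ℝ) - δ c)/(c:ℝ))) :=
            Real.volume_Ioo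
        _ = ENNReal.ofReal (2 * δ c / (c:ℝ)) := by
            rw [div_sub_div_same]
            congr 1
            ring
    · rw [if_neg hcop, E2 c d hc hcop, Set.empty_inter]
      simp
  have Ebound10 : volume (A (1,0) ∩ Set.Ioo (0:ℝ) 1) ≤ ENNReal.ofReal (δ 1) := by
    have hsub : A (1,0) ∩ Set.Ioo (0:ℝ) 1 ⊆ Set.Ioo (0:ℝ) (δ 1) := by
      intro x hx
      have hk := Ekey 1 0 le_rfl x hx
      rw [abs_lt] at hk
      refine ⟨hx.2.1, ?_⟩
      have := hk.2
      push_cast at this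
      linarith
    calc volume (A (1,0) ∩ Set.Ioo (0:ℝ) 1) ≤ volume (Set.Ioo (0:ℝ) (δ 1)) :=
          measure_mono hsub
      _ = ENNReal.ofReal (δ 1 - 0) := Real.volume_Ioo
      _ = ENNReal.ofReal (δ 1) := by rw [sub_zero]
  have Ebound11 : volume (A (1,-1) ∩ Set.Ioo (0:ℝ) 1) ≤ ENNReal.ofReal (δ 1) := by
    have hsub : A (1,-1) ∩ Set.Ioo (0:ℝ) 1 ⊆ Set.Ioo (1 - δ 1) 1 := by
      intro x hx
      have hk := Ekey 1 (-1) le_rfl x hx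
      rw [abs_lt] at hk
      refine ⟨?_, hx.2.2⟩
      have := hk.1
      push_cast at this
      linarith
    calc volume (A (1,-1) ∩ Set.Ioo (0:ℝ) 1) ≤ volume (Set.Ioo (1 - δ 1) 1) :=
          measure_mono hsub
      _ = ENNReal.ofReal (1 - (1 - δ 1)) := Real.volume_Ioo
      _ = ENNReal.ofReal (δ 1) := by norm_num
  -- inner sum bound
  have hinner : ∀ c : ℤ, 1 ≤ c →
      ∑' d : ℤ, volume (A (c,d) ∩ Set.Ioo (0:ℝ) 1)
        ≤ ENNReal.ofReal (2 * (Nat.totient c.toNat : ℝ) * δ c / (c:ℝ)) := by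
    intro c hc
    rw [tsum_eq_sum (s := Finset.Icc (-c) 0)
      (fun d hd => by rw [Evanish c hc d hd]; exact measure_empty)]
    by_cases hc1 : c = 1
    · subst hc1
      have hicc : Finset.Icc (-(1:ℤ)) 0 = {-1, 0} := by decide
      rw [hicc, Finset.sum_insert (by decide), Finset.sum_singleton]
      calc volume (A (1,-1) ∩ Set.Ioo (0:ℝ) 1) + volume (A (1,0) ∩ Set.Ioo (0:ℝ) 1)
          ≤ ENNReal.ofReal (δ 1) + ENNReal.ofReal (δ 1) := add_le_add Ebound11 Ebound10
        _ = ENNReal.ofReal (2 * (Nat.totient (1:ℤ).toNat : ℝ) * δ 1 / ((1:ℤ):ℝ)) := by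
            rw [← ENNReal.ofReal_add (le_of_lt (hδpos 1 le_rfl)) (le_of_lt (hδpos 1 le_rfl))]
            congr 1
            norm_num
            ring
    · have hc2 : 2 ≤ c := by omega
      have hc0 : (0:ℝ) < (c:ℝ) := by exact_mod_cast (by omega : (0:ℤ) < c)
      calc ∑ d ∈ Finset.Icc (-c) 0, volume (A (c,d) ∩ Set.Ioo (0:ℝ) 1)
          ≤ ∑ d ∈ Finset.Icc (-c) 0,
              (if IsCoprime c d then ENNReal.ofReal (2 * δ c / (c:ℝ)) else 0) :=
            Finset.sum_le_sum (fun d _ => Ebound2 c d hc2)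
        _ = ∑ d ∈ (Finset.Icc (-c) 0).filter (fun d => IsCoprime c d),
              ENNReal.ofReal (2 * δ c / (c:ℝ)) := (Finset.sum_filter _ _).symm
        _ = (((Finset.Icc (-c) 0).filter (fun d => IsCoprime c d)).card : ℝ≥0∞)
              * ENNReal.ofReal (2 * δ c / (c:ℝ)) := by
            rw [Finset.sum_const, nsmul_eq_mul]
        _ ≤ ((Nat.totient c.toNat : ℕ) : ℝ≥0∞) * ENNReal.ofReal (2 * δ c / (c:ℝ)) := by
            gcongr
            exact_mod_cast coprime_card_le c hc2
        _ = ENNReal.ofReal (2 * (Nat.totient c.toNat : ℝ) * δ c / (c:ℝ)) := by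
            rw [← ENNReal.ofReal_natCast, ← ENNReal.ofReal_mul (by positivity)]
            congr 1
            ring
  -- outer bound function
  set B : ℤ → ℝ≥0∞ := fun c =>
    if 1 ≤ c then ENNReal.ofReal (2 * (Nat.totient c.toNat : ℝ) * δ c / (c:ℝ)) else 0
    with hB
  -- totient series
  set v : ℕ → ℝ := fun k => (Nat.totient k : ℝ) / (k:ℝ)^s with hv
  have hvsum : Summable v := totient_summable hs2
  have hvnonneg : ∀ k, 0 ≤ v k := fun k => by
    simp only [hv]; positivity
  set Z : ℝ := ∑' k, v k with hZ
  have hZ0 : 0 ≤ Z := tsum_nonneg hvnonneg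
  -- identify B values
  have hBn : ∀ n : ℕ, B ((n:ℤ)+1)
      = ENNReal.ofReal ((2 * R ^ (-(2*s))) * v (n+1)) := by
    intro n
    have h1n : (1:ℤ) ≤ (n:ℤ)+1 := by omega
    have htn : ((n:ℤ)+1).toNat = n+1 := by omega
    simp only [hB, if_pos h1n, htn, hδ, hv]
    congr 1
    have hcast : (((n:ℤ)+1 : ℤ):ℝ) = ((n+1:ℕ):ℝ) := by push_cast; ring
    rw [hcast]
    have hm : (0:ℝ) < ((n+1:ℕ):ℝ) := by exact_mod_cast Nat.succ_pos n
    have hms : (0:ℝ) < ((n+1:ℕ):ℝ) ^ s := Real.rpow_pos_of_pos hm s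
    rw [Real.rpow_sub hm, Real.rpow_one]
    field_simp
  -- main chain
  calc ∫⁻ x in Set.Ioo (0 : ℝ) 1,
      (({q : ℤ × ℤ | cuspIdx q ∧
          R * (y x) ^ (-ε) < (ycd q.1 q.2 x (y x)) ^ ((1 : ℝ) / 4)}.ncard : ℝ≥0∞))
      ≤ ∫⁻ x in Set.Ioo (0 : ℝ) 1, ∑' q : ℤ × ℤ, (A q).indicator (fun _ => (1:ℝ≥0∞)) x := by
        apply lintegral_mono
        intro x
        refine le_trans (ncard_le_tsum_indicator _) (le_of_eq (tsum_congr fun q => ?_))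
        rfl
    _ = ∑' q : ℤ × ℤ, ∫⁻ x in Set.Ioo (0 : ℝ) 1, (A q).indicator (fun _ => (1:ℝ≥0∞)) x :=
        lintegral_tsum (fun q => (measurable_const.indicator (hAm q)).aemeasurable)
    _ = ∑' q : ℤ × ℤ, volume (A q ∩ Set.Ioo (0:ℝ) 1) := by
        refine tsum_congr fun q => ?_
        rw [lintegral_indicator (hAm q), setLIntegral_one, Measure.restrict_apply (hAm q)]
    _ = ∑' c : ℤ, ∑' d : ℤ, volume (A (c,d) ∩ Set.Ioo (0:ℝ) 1) := ENNReal.tsum_prod'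
    _ ≤ ∑' c : ℤ, B c := by
        refine ENNReal.tsum_le_tsum fun c => ?_
        by_cases hc : 1 ≤ c
        · simp only [hB, if_pos hc]
          exact hinner c hc
        · simp only [hB, if_neg hc]
          refine le_of_eq (ENNReal.tsum_eq_zero.mpr fun d => ?_)
          rw [E1 c d (by omega)]
          exact measure_empty
    _ = ∑' n : ℕ, B ((n:ℤ)+1) := by
        refine (Function.Injective.tsum_eq (g := fun n : ℕ => (n:ℤ)+1) ?_ ?_).symm
        · intro a b hab
          have hab' : (a:ℤ)+1 = (b:ℤ)+1 := hab
          have : (a:ℤ) = b := by omega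
          exact_mod_cast this
        · intro c hc
          rcases lt_or_ge c 1 with h | h
          · exfalso
            apply hc
            simp only [hB, if_neg (by omega : ¬ (1:ℤ) ≤ c)]
          · exact ⟨(c-1).toNat, by show ((c-1).toNat : ℤ) + 1 = c; omega⟩
    _ = ∑' n : ℕ, ENNReal.ofReal ((2 * R ^ (-(2*s))) * v (n+1)) := tsum_congr hBn
    _ = ENNReal.ofReal (∑' n : ℕ, (2 * R ^ (-(2*s))) * v (n+1)) := by
        refine (ENNReal.ofReal_tsum_of_nonneg (fun n => ?_) ?_).symm
        · have := hvnonneg (n+1)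
          positivity
        · exact ((summable_nat_add_iff 1).mpr hvsum).mul_left _
    _ = ENNReal.ofReal ((2 * R ^ (-(2*s))) * Z) := by
        congr 1
        rw [tsum_mul_left]
        congr 1
        have h0 : v 0 = 0 := by simp [hv]
        rw [hZ, hvsum.tsum_eq_zero_add, h0, zero_add]
    _ ≤ ENNReal.ofReal
          (2 * ((riemannZeta ((2 : ℂ) / (1 - 4 * (ε : ℂ)) - 1)) /
                 (riemannZeta ((2 : ℂ) / (1 - 4 * (ε : ℂ))))).re * R ^ (-(4 : ℝ))) := by
        apply ENNReal.ofReal_le_ofReal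
        have hcast : (2:ℂ)/(1 - 4*(ε:ℂ)) = ((s:ℝ):ℂ) := by
          rw [hs_def]; push_cast; ring
        have hZre : ((riemannZeta ((2 : ℂ) / (1 - 4 * (ε : ℂ)) - 1)) /
            (riemannZeta ((2 : ℂ) / (1 - 4 * (ε : ℂ))))).re = Z := by
          rw [hcast, totient_LSeries hs2, Complex.ofReal_re]
        rw [hZre]
        have hRle : R ^ (-(2*s)) ≤ R ^ (-(4:ℝ)) :=
          Real.rpow_le_rpow_of_exponent_le hR.le (by linarith)
        nlinarith [Real.rpow_nonneg hR0.le (-(2*s)), Real.rpow_nonneg hR0.le (-(4:ℝ))]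
end

section
/- Let λ be a Borel probability measure on ℝ absolutely continuous with respect to Lebesgue measure, let (α, β) ∈ ℝ² ∖ ℚ², and fix 0 ≤ s < t ≤ 1. With m = m(N) = ⌊sN⌋ and n = n(N) = ⌊tN⌋, the following convergences in λ-probability hold as N → ∞: (i) (1/N) Σ_{m+1 ≤ k ≤ n} z_k(x)² → 0; (ii) (1/N) Σ_{m+1 ≤ k ≤ n} a_k(x) b_k(x) → 0; (iii) (1/N) Σ_{m+1 ≤ k ≤ n} a_k(x)² → (t − s)/2; (iv) (1/N) Σ_{m+1 ≤ k ≤ n} b_k(x)² → (t − s)/2. (Here convergence in λ-probability of Y_N to c means that for every ε > 0, λ({x : |Y_N(x) − c| > ε}) → 0.) -/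
open MeasureTheory Filter Topology
open scoped ENNReal

/-- `e(w) = exp(2πiw)`. -/
noncomputable def eC (w : ℝ) : ℂ := Complex.exp (2 * Real.pi * Complex.I * w)

/-- `z_k(x) = e((k²/2 + βk)x + kα)`. -/
noncomputable def zk (α β : ℝ) (k : ℕ) (x : ℝ) : ℂ :=
  eC ((((k : ℝ) ^ 2) / 2 + β * k) * x + k * α)

/-- `a_k(x) = cos(2π((k²/2 + βk)x + kα))`. -/
noncomputable def ak (α β : ℝ) (k : ℕ) (x : ℝ) : ℝ :=
  Real.cos (2 * Real.pi * ((((k : ℝ) ^ 2) / 2 + β * k) * x + k * α))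

/-- `b_k(x) = sin(2π((k²/2 + βk)x + kα))`. -/
noncomputable def bk (α β : ℝ) (k : ℕ) (x : ℝ) : ℝ :=
  Real.sin (2 * Real.pi * ((((k : ℝ) ^ 2) / 2 + β * k) * x + k * α))

namespace Statement8Aux

lemma eC_eq (w : ℝ) : eC w = Complex.exp (((2 * Real.pi * w : ℝ) : ℂ) * Complex.I) := by
  unfold eC; congr 1; push_cast; ring

lemma norm_eC (w : ℝ) : ‖eC w‖ = 1 := by
  rw [eC_eq, Complex.norm_exp_ofReal_mul_I]

lemma eC_add (a b : ℝ) : eC (a + b) = eC a * eC b := by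
  unfold eC; rw [← Complex.exp_add]; congr 1; push_cast; ring

lemma eC_pow (a : ℝ) (j : ℕ) : eC a ^ j = eC (j * a) := by
  unfold eC; rw [← Complex.exp_nat_mul]; congr 1; push_cast; ring

lemma eC_ne_one {w : ℝ} (h : Irrational w) : eC w ≠ 1 := by
  intro he
  unfold eC at he
  rw [Complex.exp_eq_one_iff] at he
  obtain ⟨n, hn⟩ := he
  have h2 : (2 * (Real.pi : ℂ) * Complex.I) ≠ 0 := by
    simp [Real.pi_ne_zero, Complex.I_ne_zero, Complex.ofReal_ne_zero]
  have hwn : (2 * (Real.pi : ℂ) * Complex.I) * (w : ℂ)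
      = (2 * (Real.pi : ℂ) * Complex.I) * (n : ℂ) := by
    rw [show (2 * (Real.pi : ℂ) * Complex.I) * (w : ℂ)
        = 2 * (Real.pi : ℂ) * Complex.I * (w : ℂ) by ring, hn]
    ring
  have : (w : ℂ) = (n : ℂ) := mul_left_cancel₀ h2 hwn
  exact h.ne_int n (by exact_mod_cast this)

lemma eC_conj (w : ℝ) : (starRingEnd ℂ) (eC w) = eC (-w) := by
  unfold eC
  rw [← Complex.exp_conj]
  congr 1
  simp only [map_mul, Complex.conj_I, Complex.conj_ofReal, map_ofNat]
  push_cast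
  ring

lemma eC_mul_conj (a b : ℝ) : eC a * (starRingEnd ℂ) (eC b) = eC (a - b) := by
  rw [eC_conj, ← eC_add, sub_eq_add_neg]

lemma eC_re (w : ℝ) : (eC w).re = Real.cos (2 * Real.pi * w) := by
  rw [eC_eq, Complex.exp_ofReal_mul_I_re]

lemma eC_im (w : ℝ) : (eC w).im = Real.sin (2 * Real.pi * w) := by
  rw [eC_eq, Complex.exp_ofReal_mul_I_im]

/-- Geometric sum bound. -/
lemma geom_bound {r : ℂ} (hr : r ≠ 1) (hr1 : ‖r‖ = 1) (n : ℕ) :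
    ‖∑ j ∈ Finset.Ioc 0 n, r ^ j‖ ≤ 2 / ‖1 - r‖ + 1 := by
  have hr0 : (0 : ℝ) < ‖r - 1‖ := by
    rw [norm_pos_iff]; exact sub_ne_zero.2 hr
  have h1 : ∑ j ∈ Finset.Icc 0 n, r ^ j = ∑ j ∈ Finset.range (n + 1), r ^ j := by
    rw [Finset.range_eq_Ico, Finset.Ico_add_one_right_eq_Icc]
  have h2 : ∑ j ∈ Finset.Icc 0 n, r ^ j = r ^ 0 + ∑ j ∈ Finset.Ioc 0 n, r ^ j := by
    rw [Finset.Icc_eq_cons_Ioc (Nat.zero_le n), Finset.sum_cons]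
  have h3 : ∑ j ∈ Finset.Ioc 0 n, r ^ j = (r ^ (n + 1) - 1) / (r - 1) - 1 := by
    rw [← geom_sum_eq hr (n + 1), ← h1, h2]
    simp
  rw [h3]
  calc ‖(r ^ (n + 1) - 1) / (r - 1) - 1‖
      ≤ ‖(r ^ (n + 1) - 1) / (r - 1)‖ + ‖(1 : ℂ)‖ := norm_sub_le _ _
    _ ≤ 2 / ‖1 - r‖ + 1 := by
        rw [norm_div, norm_one]
        have h5 : ‖r - 1‖ = ‖1 - r‖ := norm_sub_rev _ _
        have h6 : (0 : ℝ) < ‖1 - r‖ := by rwa [← h5]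
        have h4 : ‖r ^ (n + 1) - 1‖ ≤ 2 := by
          calc ‖r ^ (n + 1) - 1‖ ≤ ‖r ^ (n + 1)‖ + ‖(1 : ℂ)‖ := norm_sub_le _ _
            _ = 2 := by rw [norm_pow, hr1, one_pow, norm_one]; norm_num
        rw [h5]
        exact add_le_add_left ((div_le_div_iff_of_pos_right h6).mpr h4) 1

/-- The Weyl exponential `f k = e(x k² + γ k)`. -/
noncomputable def fW (x γ : ℝ) (k : ℕ) : ℂ := eC (x * k ^ 2 + γ * k)

/-- The partial sums `S n = ∑_{k=1}^n f k`. -/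
noncomputable def SW (x γ : ℝ) (n : ℕ) : ℂ := ∑ k ∈ Finset.Ioc 0 n, fW x γ k

lemma norm_fW (x γ : ℝ) (k : ℕ) : ‖fW x γ k‖ = 1 := norm_eC _

lemma SW_zero (x γ : ℝ) : SW x γ 0 = 0 := by simp [SW]

lemma SW_sub (x γ : ℝ) {a b : ℕ} (hab : a ≤ b) :
    SW x γ b - SW x γ a = ∑ k ∈ Finset.Ioc a b, fW x γ k := by
  have := Finset.sum_Ioc_consecutive (fW x γ) (Nat.zero_le a) hab
  unfold SW
  linear_combination -this

lemma norm_SW_sub (x γ : ℝ) {a b : ℕ} (hab : a ≤ b) :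
    ‖SW x γ b - SW x γ a‖ ≤ ((b - a : ℕ) : ℝ) := by
  rw [SW_sub x γ hab]
  calc ‖∑ k ∈ Finset.Ioc a b, fW x γ k‖ ≤ ∑ k ∈ Finset.Ioc a b, ‖fW x γ k‖ :=
        norm_sum_le _ _
    _ = ((b - a : ℕ) : ℝ) := by
        rw [Finset.sum_congr rfl fun k _ => norm_fW x γ k]
        simp [Nat.card_Ioc]

lemma norm_SW_le (x γ : ℝ) (n : ℕ) : ‖SW x γ n‖ ≤ (n : ℝ) := by
  have := norm_SW_sub x γ (Nat.zero_le n)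
  simpa [SW_zero] using this

/-- The van der Corput key inequality. -/
lemma key (x γ : ℝ) (hx : Irrational x) (H : ℕ) :
    ∃ K : ℝ, 0 ≤ K ∧ ∀ n : ℕ,
      (H : ℝ) * ‖SW x γ n‖ ≤ Real.sqrt ((n : ℝ) * ((H : ℝ) * n + K)) + 2 * (H : ℝ) ^ 2 := by
  classical
  set r : ℕ × ℕ → ℂ := fun p => eC (2 * x * ((p.1 : ℝ) - (p.2 : ℝ))) with hrdef
  set K : ℝ := ∑ p ∈ Finset.range H ×ˢ Finset.range H,
      (if p.1 = p.2 then 0 else 2 / ‖1 - r p‖ + 1) with hKdef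
  have hK0 : 0 ≤ K := Finset.sum_nonneg fun p _ => by
    split
    · exact le_refl 0
    · positivity
  refine ⟨K, hK0, fun n => ?_⟩
  set g : ℕ → ℂ := fun j => ∑ h ∈ Finset.range H, fW x γ (j + h) with hgdef
  -- Step A: shifting
  have hshift : ∀ h : ℕ, ∑ j ∈ Finset.Ioc 0 n, fW x γ (j + h)
      = SW x γ (n + h) - SW x γ h := by
    intro h
    rw [SW_sub x γ (Nat.le_add_left h n)]
    rw [show Finset.Ioc h (n + h) = (Finset.Ioc 0 n).map (addRightEmbedding h) by
      rw [Finset.map_add_right_Ioc, zero_add], Finset.sum_map]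
    simp [addRightEmbedding]
  have hswap : ∑ j ∈ Finset.Ioc 0 n, g j
      = ∑ h ∈ Finset.range H, (SW x γ (n + h) - SW x γ h) := by
    simp only [hgdef]
    rw [Finset.sum_comm]
    exact Finset.sum_congr rfl fun h _ => hshift h
  have hA : ‖(H : ℂ) * SW x γ n - ∑ j ∈ Finset.Ioc 0 n, g j‖ ≤ 2 * (H : ℝ) ^ 2 := by
    rw [hswap]
    have heq : (H : ℂ) * SW x γ n - ∑ h ∈ Finset.range H, (SW x γ (n + h) - SW x γ h)
        = ∑ h ∈ Finset.range H, (SW x γ h - (SW x γ (n + h) - SW x γ n)) := by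
      simp only [Finset.sum_sub_distrib, Finset.sum_const, Finset.card_range, nsmul_eq_mul]
      ring
    rw [heq]
    calc ‖∑ h ∈ Finset.range H, (SW x γ h - (SW x γ (n + h) - SW x γ n))‖
        ≤ ∑ h ∈ Finset.range H, ‖SW x γ h - (SW x γ (n + h) - SW x γ n)‖ := norm_sum_le _ _
      _ ≤ ∑ h ∈ Finset.range H, (2 * (H : ℝ)) := by
          refine Finset.sum_le_sum fun h hh => ?_
          have hhH : (h : ℝ) ≤ (H : ℝ) := by
            exact_mod_cast (Finset.mem_range.mp hh).le
          calc ‖SW x γ h - (SW x γ (n + h) - SW x γ n)‖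
              ≤ ‖SW x γ h‖ + ‖SW x γ (n + h) - SW x γ n‖ := norm_sub_le _ _
            _ ≤ (h : ℝ) + ((n + h - n : ℕ) : ℝ) :=
                add_le_add (norm_SW_le x γ h) (norm_SW_sub x γ (Nat.le_add_right n h))
            _ ≤ 2 * (H : ℝ) := by
                have : ((n + h - n : ℕ) : ℝ) = (h : ℝ) := by
                  norm_cast; omega
                rw [this]; linarith
      _ = 2 * (H : ℝ) ^ 2 := by
          rw [Finset.sum_const, Finset.card_range, nsmul_eq_mul]; ring
  -- Step B: second moment
  have hsq : ∀ z : ℂ, ((‖z‖ ^ 2 : ℝ) : ℂ) = z * (starRingEnd ℂ) z := fun z => by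
    rw [Complex.mul_conj, Complex.sq_norm]
  have hBc : ((∑ j ∈ Finset.Ioc 0 n, ‖g j‖ ^ 2 : ℝ) : ℂ)
      = ∑ p ∈ Finset.range H ×ˢ Finset.range H,
          ∑ j ∈ Finset.Ioc 0 n, (fW x γ (j + p.1) * (starRingEnd ℂ) (fW x γ (j + p.2))) := by
    have hgj : ∀ j : ℕ, g j * (starRingEnd ℂ) (g j)
        = ∑ p ∈ Finset.range H ×ˢ Finset.range H,
            (fW x γ (j + p.1) * (starRingEnd ℂ) (fW x γ (j + p.2))) := by
      intro j
      simp only [hgdef]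
      rw [map_sum, Finset.sum_mul_sum, Finset.sum_product]
    calc ((∑ j ∈ Finset.Ioc 0 n, ‖g j‖ ^ 2 : ℝ) : ℂ)
        = ∑ j ∈ Finset.Ioc 0 n, ((‖g j‖ ^ 2 : ℝ) : ℂ) := Complex.ofReal_sum _ _
      _ = ∑ j ∈ Finset.Ioc 0 n, (g j * (starRingEnd ℂ) (g j)) :=
          Finset.sum_congr rfl fun j _ => hsq (g j)
      _ = ∑ j ∈ Finset.Ioc 0 n, ∑ p ∈ Finset.range H ×ˢ Finset.range H,
            (fW x γ (j + p.1) * (starRingEnd ℂ) (fW x γ (j + p.2))) :=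
          Finset.sum_congr rfl fun j _ => hgj j
      _ = _ := Finset.sum_comm
  have hTdiag : ∀ h : ℕ,
      ‖∑ j ∈ Finset.Ioc 0 n, (fW x γ (j + h) * (starRingEnd ℂ) (fW x γ (j + h)))‖
        ≤ (n : ℝ) := by
    intro h
    calc ‖∑ j ∈ Finset.Ioc 0 n, (fW x γ (j + h) * (starRingEnd ℂ) (fW x γ (j + h)))‖
        ≤ ∑ j ∈ Finset.Ioc 0 n, ‖fW x γ (j + h) * (starRingEnd ℂ) (fW x γ (j + h))‖ :=
          norm_sum_le _ _
      _ = ∑ j ∈ Finset.Ioc 0 n, (1 : ℝ) := by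
          refine Finset.sum_congr rfl fun j _ => ?_
          rw [norm_mul, RCLike.norm_conj, norm_fW]
          norm_num
      _ ≤ (n : ℝ) := by simp [Nat.card_Ioc]
  have hToff : ∀ p : ℕ × ℕ, p.1 ≠ p.2 →
      ‖∑ j ∈ Finset.Ioc 0 n, (fW x γ (j + p.1) * (starRingEnd ℂ) (fW x γ (j + p.2)))‖
        ≤ 2 / ‖1 - r p‖ + 1 := by
    rintro ⟨h, h'⟩ hne
    simp only at hne ⊢
    have hterm : ∀ j : ℕ, fW x γ (j + h) * (starRingEnd ℂ) (fW x γ (j + h'))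
        = eC (x * ((h : ℝ) ^ 2 - (h' : ℝ) ^ 2) + γ * ((h : ℝ) - (h' : ℝ)))
            * (eC (2 * x * ((h : ℝ) - (h' : ℝ)))) ^ j := by
      intro j
      unfold fW
      rw [eC_mul_conj, eC_pow, ← eC_add]
      congr 1
      push_cast
      ring
    rw [Finset.sum_congr rfl fun j _ => hterm j, ← Finset.mul_sum, norm_mul, norm_eC, one_mul]
    have hirr2 : Irrational (2 * x * ((h : ℝ) - (h' : ℝ))) := by
      have hd : ((2 : ℤ) * ((h : ℤ) - (h' : ℤ))) ≠ 0 := by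
        have : ((h : ℤ)) ≠ (h' : ℤ) := by exact_mod_cast hne
        intro hcontra
        apply this
        omega
      have := hx.intCast_mul hd
      have heq : (((2 : ℤ) * ((h : ℤ) - (h' : ℤ)) : ℤ) : ℝ) * x
          = 2 * x * ((h : ℝ) - (h' : ℝ)) := by push_cast; ring
      rwa [heq] at this
    exact geom_bound (eC_ne_one hirr2) (norm_eC _) n
  have hB : ∑ j ∈ Finset.Ioc 0 n, ‖g j‖ ^ 2 ≤ (H : ℝ) * n + K := by
    have h0 : ∑ j ∈ Finset.Ioc 0 n, ‖g j‖ ^ 2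
        = ‖((∑ j ∈ Finset.Ioc 0 n, ‖g j‖ ^ 2 : ℝ) : ℂ)‖ := by
      rw [Complex.norm_real, Real.norm_of_nonneg (by positivity)]
    rw [h0, hBc]
    calc ‖∑ p ∈ Finset.range H ×ˢ Finset.range H,
            ∑ j ∈ Finset.Ioc 0 n, (fW x γ (j + p.1) * (starRingEnd ℂ) (fW x γ (j + p.2)))‖
        ≤ ∑ p ∈ Finset.range H ×ˢ Finset.range H,
            ‖∑ j ∈ Finset.Ioc 0 n, (fW x γ (j + p.1) * (starRingEnd ℂ) (fW x γ (j + p.2)))‖ :=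
          norm_sum_le _ _
      _ ≤ ∑ p ∈ Finset.range H ×ˢ Finset.range H,
            (if p.1 = p.2 then (n : ℝ) else 2 / ‖1 - r p‖ + 1) := by
          refine Finset.sum_le_sum ?_
          rintro ⟨h1, h2⟩ hp
          by_cases hpe : h1 = h2
          · subst hpe
            simpa using hTdiag h1
          · simpa [hpe] using hToff (h1, h2) hpe
      _ = (∑ p ∈ Finset.range H ×ˢ Finset.range H, (if p.1 = p.2 then (n : ℝ) else 0)) + K := by
          rw [hKdef, ← Finset.sum_add_distrib]
          exact Finset.sum_congr rfl fun p _ => by split <;> ring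
      _ = (H : ℝ) * n + K := by
          congr 1
          rw [Finset.sum_product]
          have hinner : ∀ h ∈ Finset.range H,
              (∑ h' ∈ Finset.range H, (if h = h' then (n : ℝ) else 0)) = (n : ℝ) := by
            intro h hh
            rw [Finset.sum_ite_eq (Finset.range H) h (fun _ => (n : ℝ)), if_pos hh]
          rw [Finset.sum_congr rfl hinner, Finset.sum_const, Finset.card_range, nsmul_eq_mul]
  -- Step C: Cauchy–Schwarz and conclusion
  have hCS : (∑ j ∈ Finset.Ioc 0 n, ‖g j‖) ^ 2 ≤ (n : ℝ) * ((H : ℝ) * n + K) := by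
    calc (∑ j ∈ Finset.Ioc 0 n, ‖g j‖) ^ 2
        ≤ (Finset.Ioc 0 n).card * ∑ j ∈ Finset.Ioc 0 n, ‖g j‖ ^ 2 :=
          sq_sum_le_card_mul_sum_sq
      _ = (n : ℝ) * ∑ j ∈ Finset.Ioc 0 n, ‖g j‖ ^ 2 := by
          rw [Nat.card_Ioc]; norm_num
      _ ≤ (n : ℝ) * ((H : ℝ) * n + K) :=
          mul_le_mul_of_nonneg_left hB (Nat.cast_nonneg n)
  have hgsum : ‖∑ j ∈ Finset.Ioc 0 n, g j‖ ≤ Real.sqrt ((n : ℝ) * ((H : ℝ) * n + K)) := by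
    calc ‖∑ j ∈ Finset.Ioc 0 n, g j‖ ≤ ∑ j ∈ Finset.Ioc 0 n, ‖g j‖ := norm_sum_le _ _
      _ = Real.sqrt ((∑ j ∈ Finset.Ioc 0 n, ‖g j‖) ^ 2) := by
          rw [Real.sqrt_sq (Finset.sum_nonneg fun j _ => norm_nonneg _)]
      _ ≤ Real.sqrt ((n : ℝ) * ((H : ℝ) * n + K)) := Real.sqrt_le_sqrt hCS
  calc (H : ℝ) * ‖SW x γ n‖ = ‖(H : ℂ) * SW x γ n‖ := by
        rw [norm_mul, Complex.norm_natCast]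
    _ = ‖((H : ℂ) * SW x γ n - ∑ j ∈ Finset.Ioc 0 n, g j) + ∑ j ∈ Finset.Ioc 0 n, g j‖ := by
        rw [sub_add_cancel]
    _ ≤ ‖(H : ℂ) * SW x γ n - ∑ j ∈ Finset.Ioc 0 n, g j‖ + ‖∑ j ∈ Finset.Ioc 0 n, g j‖ :=
        norm_add_le _ _
    _ ≤ 2 * (H : ℝ) ^ 2 + Real.sqrt ((n : ℝ) * ((H : ℝ) * n + K)) := add_le_add hA hgsum
    _ = Real.sqrt ((n : ℝ) * ((H : ℝ) * n + K)) + 2 * (H : ℝ) ^ 2 := add_comm _ _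

lemma sqrt_add_le {a b : ℝ} (ha : 0 ≤ a) (hb : 0 ≤ b) :
    Real.sqrt (a + b) ≤ Real.sqrt a + Real.sqrt b := by
  rw [show Real.sqrt a + Real.sqrt b
      = Real.sqrt ((Real.sqrt a + Real.sqrt b) ^ 2) from
      (Real.sqrt_sq (by positivity)).symm]
  apply Real.sqrt_le_sqrt
  nlinarith [Real.sq_sqrt ha, Real.sq_sqrt hb, Real.sqrt_nonneg a, Real.sqrt_nonneg b]

/-- Quadratic Weyl equidistribution: for irrational `x`,
`(1/n) ∑_{k=1}^n e(xk² + γk) → 0`. -/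
lemma weyl (x γ : ℝ) (hx : Irrational x) :
    Tendsto (fun n : ℕ => ‖SW x γ n‖ / n) atTop (𝓝 0) := by
  rw [NormedAddCommGroup.tendsto_nhds_zero]
  intro ε hε
  set H : ℕ := ⌈(2 / ε) ^ 2⌉₊ + 1 with hHdef
  have hH0 : (0 : ℝ) < H := by positivity
  have hHε : Real.sqrt H / H < ε := by
    have h1 : (2 / ε) ^ 2 < (H : ℝ) := by
      calc (2 / ε) ^ 2 ≤ (⌈(2 / ε) ^ 2⌉₊ : ℝ) := Nat.le_ceil _
        _ < (H : ℝ) := by rw [hHdef]; push_cast; linarith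
    have h2 : 2 / ε < Real.sqrt H := by
      have := Real.sqrt_lt_sqrt (by positivity) h1
      rwa [Real.sqrt_sq (by positivity)] at this
    rw [Real.sqrt_div_self']
    rw [div_lt_iff₀ (by positivity : (0:ℝ) < Real.sqrt H)]
    have h4 : ε * (2 / ε) < ε * Real.sqrt H := mul_lt_mul_of_pos_left h2 hε
    have h5 : ε * (2 / ε) = 2 := by field_simp
    linarith
  obtain ⟨K, hK0, hKey⟩ := key x γ hx H
  -- the majorant
  set R : ℕ → ℝ := fun n => Real.sqrt H / H + Real.sqrt K / H / Real.sqrt n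
      + (2 * (H : ℝ) ^ 2 / H) / n with hRdef
  have hRlim : Tendsto R atTop (𝓝 (Real.sqrt H / H + 0 + 0)) := by
    refine (tendsto_const_nhds.add ?_).add ?_
    · have h1 : Tendsto (fun n : ℕ => Real.sqrt n) atTop atTop := by
        rw [tendsto_atTop_atTop]
        intro b
        refine ⟨⌈b⌉₊ ^ 2, fun a ha => ?_⟩
        have hba : ((⌈b⌉₊ ^ 2 : ℕ) : ℝ) ≤ (a : ℝ) := by exact_mod_cast ha
        calc b ≤ (⌈b⌉₊ : ℝ) := Nat.le_ceil b
          _ = Real.sqrt ((⌈b⌉₊ : ℝ) ^ 2) := (Real.sqrt_sq (Nat.cast_nonneg _)).symm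
          _ ≤ Real.sqrt a := Real.sqrt_le_sqrt (by push_cast at hba ⊢; linarith)
      have h2 : Tendsto (fun n : ℕ => (Real.sqrt n)⁻¹) atTop (𝓝 0) :=
        h1.inv_tendsto_atTop
      have := h2.const_mul (Real.sqrt K / H)
      simpa [div_eq_mul_inv] using this
    · exact tendsto_const_div_atTop_nhds_zero_nat _
  rw [add_zero, add_zero] at hRlim
  have hRev : ∀ᶠ n : ℕ in atTop, R n < ε := hRlim.eventually_lt_const hHε
  have hBnd : ∀ᶠ n : ℕ in atTop, ‖SW x γ n‖ / n ≤ R n := by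
    filter_upwards [eventually_ge_atTop 1] with n hn
    have hn0 : (0 : ℝ) < n := by exact_mod_cast hn
    have hsn0 : (0 : ℝ) < Real.sqrt n := Real.sqrt_pos.2 hn0
    have h1 : Real.sqrt ((n : ℝ) * ((H : ℝ) * n + K))
        ≤ Real.sqrt H * n + Real.sqrt n * Real.sqrt K := by
      have he : (n : ℝ) * ((H : ℝ) * n + K) = (H : ℝ) * (n : ℝ) ^ 2 + (n : ℝ) * K := by ring
      rw [he]
      calc Real.sqrt ((H : ℝ) * (n : ℝ) ^ 2 + (n : ℝ) * K)
          ≤ Real.sqrt ((H : ℝ) * (n : ℝ) ^ 2) + Real.sqrt ((n : ℝ) * K) :=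
            sqrt_add_le (by positivity) (by positivity)
        _ = Real.sqrt H * n + Real.sqrt n * Real.sqrt K := by
            rw [Real.sqrt_mul (Nat.cast_nonneg H), Real.sqrt_sq (Nat.cast_nonneg n),
              Real.sqrt_mul (Nat.cast_nonneg n)]
    have h2 : (H : ℝ) * ‖SW x γ n‖ ≤ Real.sqrt H * n + Real.sqrt n * Real.sqrt K
        + 2 * (H : ℝ) ^ 2 := by
      calc (H : ℝ) * ‖SW x γ n‖
          ≤ Real.sqrt ((n : ℝ) * ((H : ℝ) * n + K)) + 2 * (H : ℝ) ^ 2 := hKey n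
        _ ≤ Real.sqrt H * n + Real.sqrt n * Real.sqrt K + 2 * (H : ℝ) ^ 2 := by linarith
    have h3 : ‖SW x γ n‖ / n
        ≤ (Real.sqrt H * n + Real.sqrt n * Real.sqrt K + 2 * (H : ℝ) ^ 2) / (H * n) := by
      rw [div_le_div_iff₀ hn0 (by positivity)]
      calc ‖SW x γ n‖ * ((H : ℝ) * n) = ((H : ℝ) * ‖SW x γ n‖) * n := by ring
        _ ≤ (Real.sqrt H * n + Real.sqrt n * Real.sqrt K + 2 * (H : ℝ) ^ 2) * n :=
            mul_le_mul_of_nonneg_right h2 hn0.le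
    refine h3.trans (le_of_eq ?_)
    simp only [hRdef]
    have hu : Real.sqrt n ^ 2 = (n : ℝ) := Real.sq_sqrt hn0.le
    have e1 : Real.sqrt H * n / ((H : ℝ) * n) = Real.sqrt H / H := by
      rw [mul_comm (Real.sqrt H) (n : ℝ), mul_comm ((H : ℝ)) (n : ℝ),
        mul_div_mul_left _ _ hn0.ne']
    have e2 : Real.sqrt n * Real.sqrt K / ((H : ℝ) * n) = Real.sqrt K / H / Real.sqrt n := by
      rw [div_div, div_eq_div_iff (by positivity) (by positivity)]
      linear_combination (H : ℝ) * Real.sqrt K * hu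
    have e3 : 2 * (H : ℝ) ^ 2 / ((H : ℝ) * n) = (2 * (H : ℝ) ^ 2 / H) / n := by
      rw [div_div]
    rw [add_div, add_div, e1, e2, e3]
  filter_upwards [hRev, hBnd] with n h1 h2
  rw [Real.norm_of_nonneg (by positivity)]
  exact lt_of_le_of_lt h2 h1

/-- For `0 ≤ c ≤ 1`, `‖S ⌊cN⌋‖ / N → 0`. -/
lemma floor_piece (x γ : ℝ) (hx : Irrational x) {c : ℝ} (hc0 : 0 ≤ c) (hc1 : c ≤ 1) :
    Tendsto (fun N : ℕ => ‖SW x γ ⌊c * (N : ℝ)⌋₊‖ / N) atTop (𝓝 0) := by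
  rcases eq_or_lt_of_le hc0 with h0 | hpos
  · have hzz : ∀ N : ℕ, (0 : ℝ) = ‖SW x γ ⌊c * (N : ℝ)⌋₊‖ / N := by
      intro N
      rw [← h0]
      simp [SW_zero]
    exact Tendsto.congr hzz tendsto_const_nhds
  · have hto : Tendsto (fun N : ℕ => ⌊c * (N : ℝ)⌋₊) atTop atTop := by
      apply tendsto_nat_floor_atTop.comp
      exact (tendsto_natCast_atTop_atTop (R := ℝ)).const_mul_atTop hpos
    have h1 : Tendsto (fun N : ℕ => ‖SW x γ ⌊c * (N : ℝ)⌋₊‖ / (⌊c * (N : ℝ)⌋₊ : ℝ))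
        atTop (𝓝 0) := (weyl x γ hx).comp hto
    apply squeeze_zero (fun N => by positivity) _ h1
    intro N
    by_cases hfl : ⌊c * (N : ℝ)⌋₊ = 0
    · simp [hfl, SW_zero]
    · have hfl1 : 1 ≤ ⌊c * (N : ℝ)⌋₊ := Nat.one_le_iff_ne_zero.2 hfl
      have hflN : ⌊c * (N : ℝ)⌋₊ ≤ N := by
        calc ⌊c * (N : ℝ)⌋₊ ≤ ⌊(N : ℝ)⌋₊ := Nat.floor_le_floor (by nlinarith [Nat.cast_nonneg (α := ℝ) N])
          _ = N := Nat.floor_natCast N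
      refine div_le_div_of_nonneg_left (norm_nonneg _) ?_ ?_
      · exact_mod_cast hfl1
      · exact_mod_cast hflN

lemma zk_sq (α β : ℝ) (k : ℕ) (x : ℝ) :
    (zk α β k x) ^ 2 = eC (2 * ((((k : ℝ) ^ 2) / 2 + β * k) * x + k * α)) := by
  unfold zk
  rw [sq, ← eC_add, ← two_mul]

lemma zk_sq_fW (α β : ℝ) (k : ℕ) (x : ℝ) :
    (zk α β k x) ^ 2 = fW x (2 * β * x + 2 * α) k := by
  rw [zk_sq]
  unfold fW
  congr 1
  ring

lemma zk_sq_re (α β : ℝ) (k : ℕ) (x : ℝ) :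
    ((zk α β k x) ^ 2).re = 2 * (ak α β k x) ^ 2 - 1 := by
  rw [zk_sq, eC_re]
  unfold ak
  rw [show 2 * Real.pi * (2 * ((((k : ℝ) ^ 2) / 2 + β * k) * x + k * α))
      = 2 * (2 * Real.pi * ((((k : ℝ) ^ 2) / 2 + β * k) * x + k * α)) by ring,
    Real.cos_two_mul]

lemma zk_sq_im (α β : ℝ) (k : ℕ) (x : ℝ) :
    ((zk α β k x) ^ 2).im = 2 * (ak α β k x * bk α β k x) := by
  rw [zk_sq, eC_im]
  unfold ak bk
  rw [show 2 * Real.pi * (2 * ((((k : ℝ) ^ 2) / 2 + β * k) * x + k * α))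
      = 2 * (2 * Real.pi * ((((k : ℝ) ^ 2) / 2 + β * k) * x + k * α)) by ring,
    Real.sin_two_mul]
  ring

lemma ak_sq_add_bk_sq (α β : ℝ) (k : ℕ) (x : ℝ) :
    (ak α β k x) ^ 2 + (bk α β k x) ^ 2 = 1 := by
  unfold ak bk
  exact Real.cos_sq_add_sin_sq _

/-- the sum over the window as a difference of `SW`s -/
lemma window_sum (α β s t : ℝ) (hs : 0 ≤ s) (hst : s ≤ t) (x : ℝ) (N : ℕ) :
    ∑ k ∈ Finset.Icc (⌊s * (N : ℝ)⌋₊ + 1) ⌊t * (N : ℝ)⌋₊, (zk α β k x) ^ 2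
      = SW x (2 * β * x + 2 * α) ⌊t * (N : ℝ)⌋₊ - SW x (2 * β * x + 2 * α) ⌊s * (N : ℝ)⌋₊ := by
  have hm : ⌊s * (N : ℝ)⌋₊ ≤ ⌊t * (N : ℝ)⌋₊ :=
    Nat.floor_le_floor (by nlinarith [Nat.cast_nonneg (α := ℝ) N])
  rw [SW_sub _ _ hm, Finset.Icc_add_one_left_eq_Ioc]
  exact Finset.sum_congr rfl fun k _ => zk_sq_fW α β k x

/-- Master pointwise convergence for part (i). -/
lemma master (α β s t : ℝ) (hs : 0 ≤ s) (hst : s < t) (ht : t ≤ 1) {x : ℝ}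
    (hx : Irrational x) :
    Tendsto (fun N : ℕ => ((N : ℝ) : ℂ)⁻¹ *
      ∑ k ∈ Finset.Icc (⌊s * (N : ℝ)⌋₊ + 1) ⌊t * (N : ℝ)⌋₊, (zk α β k x) ^ 2)
      atTop (𝓝 0) := by
  set γ := 2 * β * x + 2 * α with hγ
  rw [tendsto_zero_iff_norm_tendsto_zero]
  apply squeeze_zero (fun N => norm_nonneg _)
    (g := fun N : ℕ => ‖SW x γ ⌊t * (N : ℝ)⌋₊‖ / N + ‖SW x γ ⌊s * (N : ℝ)⌋₊‖ / N)
  · intro N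
    rw [window_sum α β s t hs hst.le x N, ← hγ]
    rw [norm_mul, norm_inv]
    have : ‖((N : ℝ) : ℂ)‖ = (N : ℝ) := by
      rw [Complex.norm_real, Real.norm_of_nonneg (Nat.cast_nonneg N)]
    rw [this]
    calc ((N : ℝ))⁻¹ * ‖SW x γ ⌊t * (N : ℝ)⌋₊ - SW x γ ⌊s * (N : ℝ)⌋₊‖
        ≤ ((N : ℝ))⁻¹ * (‖SW x γ ⌊t * (N : ℝ)⌋₊‖ + ‖SW x γ ⌊s * (N : ℝ)⌋₊‖) := by
          apply mul_le_mul_of_nonneg_left (norm_sub_le _ _) (by positivity)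
      _ = ‖SW x γ ⌊t * (N : ℝ)⌋₊‖ / N + ‖SW x γ ⌊s * (N : ℝ)⌋₊‖ / N := by
          rw [mul_add]; rw [div_eq_inv_mul, div_eq_inv_mul]
  · have h1 := floor_piece x γ hx (le_trans hs hst.le) ht
    have h2 := floor_piece x γ hx hs (hst.le.trans ht)
    simpa using h1.add h2

lemma card_window (s t : ℝ) (N : ℕ) :
    (Finset.Icc (⌊s * (N : ℝ)⌋₊ + 1) ⌊t * (N : ℝ)⌋₊).card
      = ⌊t * (N : ℝ)⌋₊ - ⌊s * (N : ℝ)⌋₊ := by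
  rw [Nat.card_Icc]
  omega

lemma card_lim (s t : ℝ) (hs : 0 ≤ s) (hst : s ≤ t) :
    Tendsto (fun N : ℕ =>
      (((Finset.Icc (⌊s * (N : ℝ)⌋₊ + 1) ⌊t * (N : ℝ)⌋₊).card : ℝ) / N))
      atTop (𝓝 (t - s)) := by
  have hfs : Tendsto (fun N : ℕ => (⌊s * (N : ℝ)⌋₊ : ℝ) / N) atTop (𝓝 s) :=
    (tendsto_nat_floor_mul_div_atTop hs).comp tendsto_natCast_atTop_atTop
  have hft : Tendsto (fun N : ℕ => (⌊t * (N : ℝ)⌋₊ : ℝ) / N) atTop (𝓝 t) :=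
    (tendsto_nat_floor_mul_div_atTop (hs.trans hst)).comp tendsto_natCast_atTop_atTop
  have := hft.sub hfs
  apply this.congr
  intro N
  have hm : ⌊s * (N : ℝ)⌋₊ ≤ ⌊t * (N : ℝ)⌋₊ :=
    Nat.floor_le_floor (by nlinarith [Nat.cast_nonneg (α := ℝ) N])
  rw [card_window, Nat.cast_sub hm, sub_div]

/-- almost every point is irrational -/
lemma ae_irrational (lam : Measure ℝ) (hac : lam ≪ (volume : Measure ℝ)) :
    ∀ᵐ x ∂lam, Irrational x := by
  rw [ae_iff]
  have h1 : {x : ℝ | ¬ Irrational x} = Set.range ((↑) : ℚ → ℝ) := by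
    ext x
    simp [Irrational]
  rw [h1]
  exact hac ((Set.countable_range _).measure_zero _)

end Statement8Aux

open Statement8Aux

theorem statement8
    (lam : Measure ℝ) (hprob : IsProbabilityMeasure lam)
    (hac : lam ≪ (volume : Measure ℝ))
    (α β : ℝ) (hirr : ¬ ∃ a b : ℚ, α = (a : ℝ) ∧ β = (b : ℝ))
    (s t : ℝ) (hs : 0 ≤ s) (hst : s < t) (ht : t ≤ 1) :
    (∀ ε : ℝ, 0 < ε →
      Tendsto (fun N : ℕ =>
          lam {x : ℝ | ε < ‖(((N : ℝ) : ℂ)⁻¹ *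
            ∑ k ∈ Finset.Icc (⌊s * (N : ℝ)⌋₊ + 1) ⌊t * (N : ℝ)⌋₊, (zk α β k x) ^ 2)‖})
        atTop (𝓝 0)) ∧
    (∀ ε : ℝ, 0 < ε →
      Tendsto (fun N : ℕ =>
          lam {x : ℝ | ε < |(N : ℝ)⁻¹ *
            ∑ k ∈ Finset.Icc (⌊s * (N : ℝ)⌋₊ + 1) ⌊t * (N : ℝ)⌋₊, ak α β k x * bk α β k x|})
        atTop (𝓝 0)) ∧
    (∀ ε : ℝ, 0 < ε →
      Tendsto (fun N : ℕ =>
          lam {x : ℝ | ε < |(N : ℝ)⁻¹ *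
            (∑ k ∈ Finset.Icc (⌊s * (N : ℝ)⌋₊ + 1) ⌊t * (N : ℝ)⌋₊, (ak α β k x) ^ 2) -
              (t - s) / 2|})
        atTop (𝓝 0)) ∧
    (∀ ε : ℝ, 0 < ε →
      Tendsto (fun N : ℕ =>
          lam {x : ℝ | ε < |(N : ℝ)⁻¹ *
            (∑ k ∈ Finset.Icc (⌊s * (N : ℝ)⌋₊ + 1) ⌊t * (N : ℝ)⌋₊, (bk α β k x) ^ 2) -
              (t - s) / 2|})
        atTop (𝓝 0)) := by
  classical
  have hcont_zk : ∀ k : ℕ, Continuous (fun x : ℝ => zk α β k x) := by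
    intro k
    unfold zk eC
    fun_prop
  have hcont_ak : ∀ k : ℕ, Continuous (fun x : ℝ => ak α β k x) := by
    intro k
    unfold ak
    fun_prop
  have hcont_bk : ∀ k : ℕ, Continuous (fun x : ℝ => bk α β k x) := by
    intro k
    unfold bk
    fun_prop
  have hae := ae_irrational lam hac
  -- the complex-valued functions
  set FC : ℕ → ℝ → ℂ := fun N x => ((N : ℝ) : ℂ)⁻¹ *
      ∑ k ∈ Finset.Icc (⌊s * (N : ℝ)⌋₊ + 1) ⌊t * (N : ℝ)⌋₊, (zk α β k x) ^ 2 with hFC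
  have hFCmeas : ∀ N : ℕ, AEStronglyMeasurable (FC N) lam := by
    intro N
    apply Continuous.aestronglyMeasurable
    exact continuous_const.mul (continuous_finset_sum _ fun k _ => (hcont_zk k).pow 2)
  have hFCae : ∀ᵐ x ∂lam, Tendsto (fun N => FC N x) atTop (𝓝 ((fun _ : ℝ => (0 : ℂ)) x)) := by
    filter_upwards [hae] with x hx
    exact master α β s t hs hst ht hx
  have hFCtim : TendstoInMeasure lam FC atTop (fun _ => (0 : ℂ)) :=
    tendstoInMeasure_of_tendsto_ae hFCmeas hFCae
  -- generic squeeze from TendstoInMeasure to the stated form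
  have key_squeeze : ∀ {E : Type} [inst : PseudoMetricSpace E]
      (f : ℕ → ℝ → E) (g : ℝ → E),
      TendstoInMeasure lam f atTop g → ∀ ε : ℝ, 0 < ε →
      Tendsto (fun N : ℕ => lam {x : ℝ | ε < dist (f N x) (g x)}) atTop (𝓝 0) := by
    intro E inst f g htim ε hε
    have h := htim (ENNReal.ofReal ε) (ENNReal.ofReal_pos.2 hε)
    refine tendsto_of_tendsto_of_tendsto_of_le_of_le
      (g := fun _ : ℕ => (0 : ℝ≥0∞)) tendsto_const_nhds h
      (fun N => zero_le)
      (fun N => measure_mono fun x hx =>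
        show ENNReal.ofReal ε ≤ edist (f N x) (g x) by
            rw [edist_dist]; exact ENNReal.ofReal_le_ofReal (le_of_lt hx))
  refine ⟨?_, ?_, ?_, ?_⟩
  · -- part (i)
    intro ε hε
    have := key_squeeze FC (fun _ => (0 : ℂ)) hFCtim ε hε
    apply this.congr
    intro N
    congr 1
    ext x
    simp only [Set.mem_setOf_eq, dist_zero_right, hFC]
  · -- part (ii)
    intro ε hε
    set F : ℕ → ℝ → ℝ := fun N x => (N : ℝ)⁻¹ *
        ∑ k ∈ Finset.Icc (⌊s * (N : ℝ)⌋₊ + 1) ⌊t * (N : ℝ)⌋₊, ak α β k x * bk α β k x with hF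
    have hFeq : ∀ N x, F N x = (FC N x).im / 2 := by
      intro N x
      rw [hF, hFC]
      simp only
      rw [show ((N : ℝ) : ℂ)⁻¹ = (((N : ℝ)⁻¹ : ℝ) : ℂ) by rw [Complex.ofReal_inv],
        Complex.im_ofReal_mul, Complex.im_sum]
      rw [Finset.mul_sum, Finset.mul_sum]
      rw [Finset.sum_div]
      refine Finset.sum_congr rfl fun k _ => ?_
      rw [zk_sq_im]
      ring
    have hFmeas : ∀ N : ℕ, AEStronglyMeasurable (F N) lam := by
      intro N
      apply Continuous.aestronglyMeasurable
      exact continuous_const.mul (continuous_finset_sum _ fun k _ =>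
        (hcont_ak k).mul (hcont_bk k))
    have hFae : ∀ᵐ x ∂lam, Tendsto (fun N => F N x) atTop (𝓝 ((fun _ : ℝ => (0 : ℝ)) x)) := by
      filter_upwards [hae] with x hx
      have h1 := master α β s t hs hst ht hx
      have h2 : Tendsto (fun N => (FC N x).im) atTop (𝓝 0) := by
        have := (Complex.continuous_im.tendsto 0).comp h1
        rw [Complex.zero_im] at this; exact this
      have h3 := h2.div_const 2
      rw [zero_div] at h3
      exact h3.congr fun N => (hFeq N x).symm
    have htim : TendstoInMeasure lam F atTop (fun _ => (0 : ℝ)) :=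
      tendstoInMeasure_of_tendsto_ae hFmeas hFae
    have := key_squeeze F (fun _ => (0 : ℝ)) htim ε hε
    apply this.congr
    intro N
    congr 1
    ext x
    simp only [Set.mem_setOf_eq, Real.dist_eq, sub_zero, hF]
  · -- part (iii)
    intro ε hε
    set F : ℕ → ℝ → ℝ := fun N x => (N : ℝ)⁻¹ *
        ∑ k ∈ Finset.Icc (⌊s * (N : ℝ)⌋₊ + 1) ⌊t * (N : ℝ)⌋₊, (ak α β k x) ^ 2 with hF
    have hFeq : ∀ N x, F N x =
        (((Finset.Icc (⌊s * (N : ℝ)⌋₊ + 1) ⌊t * (N : ℝ)⌋₊).card : ℝ) / N) / 2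
          + (FC N x).re / 2 := by
      intro N x
      rw [hF, hFC]
      simp only
      rw [show ((N : ℝ) : ℂ)⁻¹ = (((N : ℝ)⁻¹ : ℝ) : ℂ) by rw [Complex.ofReal_inv],
        Complex.re_ofReal_mul, Complex.re_sum]
      have hsum : ∑ k ∈ Finset.Icc (⌊s * (N : ℝ)⌋₊ + 1) ⌊t * (N : ℝ)⌋₊, (ak α β k x) ^ 2
          = (((Finset.Icc (⌊s * (N : ℝ)⌋₊ + 1) ⌊t * (N : ℝ)⌋₊).card : ℝ)
              + ∑ k ∈ Finset.Icc (⌊s * (N : ℝ)⌋₊ + 1) ⌊t * (N : ℝ)⌋₊,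
                  ((zk α β k x) ^ 2).re) / 2 := by
        have h1 : ∀ k ∈ Finset.Icc (⌊s * (N : ℝ)⌋₊ + 1) ⌊t * (N : ℝ)⌋₊,
            (ak α β k x) ^ 2 = (1 + ((zk α β k x) ^ 2).re) / 2 := by
          intro k _
          rw [zk_sq_re]
          ring
        rw [Finset.sum_congr rfl h1, ← Finset.sum_div, Finset.sum_add_distrib,
          Finset.sum_const, nsmul_eq_mul, mul_one]
      rw [hsum]
      rw [div_eq_mul_inv ((Finset.Icc (⌊s * (N : ℝ)⌋₊ + 1) ⌊t * (N : ℝ)⌋₊).card : ℝ)]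
      ring
    have hFmeas : ∀ N : ℕ, AEStronglyMeasurable (F N) lam := by
      intro N
      apply Continuous.aestronglyMeasurable
      exact continuous_const.mul (continuous_finset_sum _ fun k _ => (hcont_ak k).pow 2)
    have hFae : ∀ᵐ x ∂lam, Tendsto (fun N => F N x)
        atTop (𝓝 ((fun _ : ℝ => (t - s) / 2) x)) := by
      filter_upwards [hae] with x hx
      have h1 := master α β s t hs hst ht hx
      have h2 : Tendsto (fun N => (FC N x).re) atTop (𝓝 0) := by
        have := (Complex.continuous_re.tendsto 0).comp h1
        rw [Complex.zero_re] at this; exact this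
      have h3 := (card_lim s t hs hst.le).div_const 2
      have h4 := h3.add (h2.div_const 2)
      rw [zero_div, add_zero] at h4
      exact h4.congr fun N => (hFeq N x).symm
    have htim : TendstoInMeasure lam F atTop (fun _ => (t - s) / 2) :=
      tendstoInMeasure_of_tendsto_ae hFmeas hFae
    have := key_squeeze F (fun _ => (t - s) / 2) htim ε hε
    apply this.congr
    intro N
    congr 1
  · -- part (iv)
    intro ε hε
    set F : ℕ → ℝ → ℝ := fun N x => (N : ℝ)⁻¹ *
        ∑ k ∈ Finset.Icc (⌊s * (N : ℝ)⌋₊ + 1) ⌊t * (N : ℝ)⌋₊, (bk α β k x) ^ 2 with hF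
    have hFeq : ∀ N x, F N x =
        (((Finset.Icc (⌊s * (N : ℝ)⌋₊ + 1) ⌊t * (N : ℝ)⌋₊).card : ℝ) / N) / 2
          - (FC N x).re / 2 := by
      intro N x
      rw [hF, hFC]
      simp only
      rw [show ((N : ℝ) : ℂ)⁻¹ = (((N : ℝ)⁻¹ : ℝ) : ℂ) by rw [Complex.ofReal_inv],
        Complex.re_ofReal_mul, Complex.re_sum]
      have hsum : ∑ k ∈ Finset.Icc (⌊s * (N : ℝ)⌋₊ + 1) ⌊t * (N : ℝ)⌋₊, (bk α β k x) ^ 2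
          = (((Finset.Icc (⌊s * (N : ℝ)⌋₊ + 1) ⌊t * (N : ℝ)⌋₊).card : ℝ)
              - ∑ k ∈ Finset.Icc (⌊s * (N : ℝ)⌋₊ + 1) ⌊t * (N : ℝ)⌋₊,
                  ((zk α β k x) ^ 2).re) / 2 := by
        have h1 : ∀ k ∈ Finset.Icc (⌊s * (N : ℝ)⌋₊ + 1) ⌊t * (N : ℝ)⌋₊,
            (bk α β k x) ^ 2 = (1 - ((zk α β k x) ^ 2).re) / 2 := by
          intro k _
          rw [zk_sq_re]
          have := ak_sq_add_bk_sq α β k x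
          linarith
        rw [Finset.sum_congr rfl h1, ← Finset.sum_div, Finset.sum_sub_distrib,
          Finset.sum_const, nsmul_eq_mul, mul_one]
      rw [hsum]
      rw [div_eq_mul_inv ((Finset.Icc (⌊s * (N : ℝ)⌋₊ + 1) ⌊t * (N : ℝ)⌋₊).card : ℝ)]
      ring
    have hFmeas : ∀ N : ℕ, AEStronglyMeasurable (F N) lam := by
      intro N
      apply Continuous.aestronglyMeasurable
      exact continuous_const.mul (continuous_finset_sum _ fun k _ => (hcont_bk k).pow 2)
    have hFae : ∀ᵐ x ∂lam, Tendsto (fun N => F N x)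
        atTop (𝓝 ((fun _ : ℝ => (t - s) / 2) x)) := by
      filter_upwards [hae] with x hx
      have h1 := master α β s t hs hst ht hx
      have h2 : Tendsto (fun N => (FC N x).re) atTop (𝓝 0) := by
        have := (Complex.continuous_re.tendsto 0).comp h1
        rw [Complex.zero_re] at this; exact this
      have h3 := (card_lim s t hs hst.le).div_const 2
      have h4 := h3.sub (h2.div_const 2)
      rw [zero_div, sub_zero] at h4
      exact h4.congr fun N => (hFeq N x).symm
    have htim : TendstoInMeasure lam F atTop (fun _ => (t - s) / 2) :=
      tendstoInMeasure_of_tendsto_ae hFmeas hFae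
    have := key_squeeze F (fun _ => (t - s) / 2) htim ε hε
    apply this.congr
    intro N
    congr 1
end

section
/- Let f₀ : ℝ → ℝ satisfy f₀(x) = 0 for x ≤ 0, f₀(x) = 1 for x ≥ 1, and f₀(x) + f₀(1 − x) = 1 for 0 < x < 1. Let 0 < c₁ < c₂ < c₃ be in geometric progression, c₂ = p c₁ and c₃ = p c₂ with p > 1, and let F = F_{c₁,c₂,c₃}(x) = Σ_{j=0}^∞ f_{c₁,c₂,c₃}(p^j x). Then for every x ∈ ℝ: F(x) + F(c₂ + c₃ − x) = 𝟙_{(0, c₂+c₃)}(x). (In particular, with c₁ = 1/6, c₂ = 1/3, c₃ = 2/3, the functions χ_L(x) = F(x) and χ_R(x) = F(1 − x) satisfy χ_L + χ_R = 𝟙_{(0,1)}.) -/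
/-- The bump `f_{c₁,c₂,c₃}` built from the template `f₀`. -/
noncomputable def fc (f₀ : ℝ → ℝ) (c₁ c₂ c₃ : ℝ) (x : ℝ) : ℝ :=
  if x ≤ c₁ then 0
  else if x ≤ c₂ then f₀ ((x - c₁) / (c₂ - c₁))
  else if x ≤ c₃ then f₀ ((c₃ - x) / (c₃ - c₂))
  else 0

/-- `F_{c₁,c₂,c₃}(x) = Σ_{j=0}^∞ f_{c₁,c₂,c₃}(p^j x)`. -/
noncomputable def Fc (f₀ : ℝ → ℝ) (c₁ c₂ c₃ p : ℝ) (x : ℝ) : ℝ :=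
  ∑' j : ℕ, fc f₀ c₁ c₂ c₃ (p ^ j * x)

lemma fc_of_le (f₀ : ℝ → ℝ) {c₁ c₂ c₃ z : ℝ} (h : z ≤ c₁) :
    fc f₀ c₁ c₂ c₃ z = 0 := by simp [fc, h]

lemma fc_of_ge {f₀ : ℝ → ℝ} (h0 : ∀ x : ℝ, x ≤ 0 → f₀ x = 0)
    {c₁ c₂ c₃ z : ℝ} (h23 : c₂ < c₃) (h : c₃ ≤ z) :
    fc f₀ c₁ c₂ c₃ z = 0 := by
  unfold fc
  split_ifs with h1 h2 h3
  · rfl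
  · exact absurd (h.trans h2) (not_le.mpr h23)
  · exact h0 _ (div_nonpos_of_nonpos_of_nonneg (by linarith) (by linarith))
  · rfl

lemma Fc_of_nonpos (f₀ : ℝ → ℝ) {c₁ c₂ c₃ p x : ℝ} (hc₁ : 0 < c₁) (hp : 0 < p)
    (hx : x ≤ 0) : Fc f₀ c₁ c₂ c₃ p x = 0 := by
  have : ∀ j : ℕ, fc f₀ c₁ c₂ c₃ (p ^ j * x) = 0 := fun j =>
    fc_of_le f₀ (le_trans (mul_nonpos_of_nonneg_of_nonpos (pow_pos hp j).le hx) hc₁.le)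
  simp [Fc, this]

lemma Fc_of_ge {f₀ : ℝ → ℝ} (h0 : ∀ x : ℝ, x ≤ 0 → f₀ x = 0)
    {c₁ c₂ c₃ p x : ℝ} (h23 : c₂ < c₃) (hc₃ : 0 < c₃) (hp : 1 < p)
    (hx : c₃ ≤ x) : Fc f₀ c₁ c₂ c₃ p x = 0 := by
  have : ∀ j : ℕ, fc f₀ c₁ c₂ c₃ (p ^ j * x) = 0 := by
    intro j
    refine fc_of_ge h0 h23 ?_
    have h1 : (1 : ℝ) ≤ p ^ j := one_le_pow₀ hp.le
    nlinarith
  simp [Fc, this]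

lemma Fc_mid {f₀ : ℝ → ℝ} (h0 : ∀ x : ℝ, x ≤ 0 → f₀ x = 0)
    {c₁ c₂ c₃ p x : ℝ} (hc₁ : 0 < c₁) (hp : 1 < p)
    (hc₂ : c₂ = p * c₁) (hc₃ : c₃ = p * c₂)
    (hx1 : c₂ < x) (hx2 : x < c₃) :
    Fc f₀ c₁ c₂ c₃ p x = f₀ ((c₃ - x) / (c₃ - c₂)) := by
  have h12 : c₁ < c₂ := by nlinarith
  have h23 : c₂ < c₃ := by nlinarith
  rw [Fc, tsum_eq_single 0 ?_]
  · have hx1' : ¬ (x ≤ c₁) := by push_neg; nlinarith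
    have hx2' : ¬ (x ≤ c₂) := not_le.mpr hx1
    simp only [fc, pow_zero, one_mul, if_neg hx1', if_neg hx2', if_pos hx2.le]
  · intro j hj
    refine fc_of_ge h0 h23 ?_
    have hj1 : 1 ≤ j := Nat.one_le_iff_ne_zero.mpr hj
    have : p ≤ p ^ j := le_self_pow₀ (by linarith) hj
    have hc₂0 : 0 < c₂ := by nlinarith
    nlinarith

lemma Fc_left {f₀ : ℝ → ℝ}
    (h0 : ∀ x : ℝ, x ≤ 0 → f₀ x = 0) (h1 : ∀ x : ℝ, 1 ≤ x → f₀ x = 1)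
    (hsym : ∀ x : ℝ, 0 < x → x < 1 → f₀ x + f₀ (1 - x) = 1)
    {c₁ c₂ c₃ p : ℝ} (hc₁ : 0 < c₁) (hp : 1 < p)
    (hc₂ : c₂ = p * c₁) (hc₃ : c₃ = p * c₂)
    {x : ℝ} (hx : 0 < x) (hxc : x ≤ c₂) :
    Fc f₀ c₁ c₂ c₃ p x = 1 := by
  have h12 : c₁ < c₂ := by nlinarith
  have h23 : c₂ < c₃ := by nlinarith
  have hp0 : (0:ℝ) < p := by linarith
  have hP : ∃ n : ℕ, c₁ < p ^ n * x := by
    obtain ⟨n, hn⟩ := pow_unbounded_of_one_lt (c₁ / x) hp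
    exact ⟨n, by rwa [div_lt_iff₀ hx] at hn⟩
  set k := Nat.find hP with hkdef
  have hk : c₁ < p ^ k * x := Nat.find_spec hP
  have hmin : ∀ j < k, p ^ j * x ≤ c₁ := fun j hj => not_lt.1 (Nat.find_min hP hj)
  have hk2 : p ^ k * x ≤ c₂ := by
    rcases Nat.eq_zero_or_pos k with h | h
    · rw [h]; simpa using hxc
    · have hm := hmin (k - 1) (by omega)
      have hks : p ^ k = p * p ^ (k - 1) := by
        rw [← pow_succ']; congr 1; omega
      rw [hks]; nlinarith
  have hside : ∀ j ∉ ({k, k + 1} : Finset ℕ), fc f₀ c₁ c₂ c₃ (p ^ j * x) = 0 := by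
    intro j hj
    simp only [Finset.mem_insert, Finset.mem_singleton] at hj
    push_neg at hj
    rcases lt_or_ge j k with h | h
    · exact fc_of_le f₀ (hmin j h)
    · have hj2 : k + 2 ≤ j := by omega
      refine fc_of_ge h0 h23 ?_
      have h1 : p ^ (k + 2) ≤ p ^ j := pow_le_pow_right₀ hp.le hj2
      have h2 : p ^ (k + 2) * x ≤ p ^ j * x := mul_le_mul_of_nonneg_right h1 hx.le
      have h3 : p ^ (k + 2) * x = p ^ 2 * (p ^ k * x) := by ring
      have hp2 : (0:ℝ) < p ^ 2 := by positivity
      nlinarith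
  rw [Fc, tsum_eq_sum hside, Finset.sum_pair (by omega : k ≠ k + 1)]
  set u := p ^ k * x with hu
  have hpu : p ^ (k + 1) * x = p * u := by rw [hu]; ring
  have hfu : fc f₀ c₁ c₂ c₃ u = f₀ ((u - c₁) / (c₂ - c₁)) := by
    simp only [fc, if_neg (not_le.mpr hk), if_pos hk2]
  have hpu1 : ¬ (p * u ≤ c₁) := by nlinarith
  have hpu2 : ¬ (p * u ≤ c₂) := by nlinarith
  have hpu3 : p * u ≤ c₃ := by nlinarith
  have hfpu : fc f₀ c₁ c₂ c₃ (p ^ (k + 1) * x) = f₀ ((c₃ - p * u) / (c₃ - c₂)) := by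
    rw [hpu]; simp only [fc, if_neg hpu1, if_neg hpu2, if_pos hpu3]
  have hratio : (c₃ - p * u) / (c₃ - c₂) = 1 - (u - c₁) / (c₂ - c₁) := by
    have hd : (0:ℝ) < c₂ - c₁ := by linarith
    have h3 : c₃ - c₂ = p * (c₂ - c₁) := by rw [hc₃, hc₂]; ring
    have h4 : c₃ - p * u = p * (c₂ - u) := by rw [hc₃]; ring
    rw [h3, h4, mul_div_mul_left _ _ (by linarith : p ≠ 0),
      eq_sub_iff_add_eq, ← add_div, div_eq_one_iff_eq hd.ne']
    ring
  rw [hfu, hfpu, hratio]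
  rcases lt_or_eq_of_le hk2 with h | h
  · have ht0 : 0 < (u - c₁) / (c₂ - c₁) := by
      apply div_pos <;> linarith
    have ht1 : (u - c₁) / (c₂ - c₁) < 1 := by
      rw [div_lt_one (by linarith)]; linarith
    exact hsym _ ht0 ht1
  · have : (u - c₁) / (c₂ - c₁) = 1 := by
      rw [div_eq_one_iff_eq (by linarith)]; linarith
    rw [this, h1 1 le_rfl, h0 (1 - 1) (by norm_num)]; norm_num

theorem statement10 (f₀ : ℝ → ℝ)
    (h0 : ∀ x : ℝ, x ≤ 0 → f₀ x = 0) (h1 : ∀ x : ℝ, 1 ≤ x → f₀ x = 1)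
    (hsym : ∀ x : ℝ, 0 < x → x < 1 → f₀ x + f₀ (1 - x) = 1)
    (c₁ c₂ c₃ p : ℝ) (hc₁ : 0 < c₁) (hp : 1 < p)
    (hc₂ : c₂ = p * c₁) (hc₃ : c₃ = p * c₂) :
    ∀ x : ℝ,
      Fc f₀ c₁ c₂ c₃ p x + Fc f₀ c₁ c₂ c₃ p (c₂ + c₃ - x) =
        Set.indicator (Set.Ioo (0 : ℝ) (c₂ + c₃)) (fun _ => (1 : ℝ)) x := by
  intro x
  have h12 : c₁ < c₂ := by nlinarith
  have h23 : c₂ < c₃ := by nlinarith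
  have hc₂0 : (0:ℝ) < c₂ := by nlinarith
  have hc₃0 : (0:ℝ) < c₃ := by linarith
  rcases le_or_gt x 0 with hx0 | hx0
  · rw [Fc_of_nonpos f₀ hc₁ (by linarith) hx0,
      Fc_of_ge h0 h23 hc₃0 hp (by linarith),
      Set.indicator_of_notMem (by simp [Set.mem_Ioo]; intro h; linarith)]
    norm_num
  rcases le_or_gt (c₂ + c₃) x with hx1 | hx1
  · rw [Fc_of_ge h0 h23 hc₃0 hp (by linarith),
      Fc_of_nonpos f₀ hc₁ (by linarith) (by linarith),
      Set.indicator_of_notMem (by simp [Set.mem_Ioo]; intro h; linarith)]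
    norm_num
  rw [Set.indicator_of_mem (Set.mem_Ioo.mpr ⟨hx0, hx1⟩)]
  rcases le_or_gt x c₂ with hx2 | hx2
  · rw [Fc_left h0 h1 hsym hc₁ hp hc₂ hc₃ hx0 hx2,
      Fc_of_ge h0 h23 hc₃0 hp (by linarith)]
    norm_num
  rcases lt_or_ge x c₃ with hx3 | hx3
  · have hy1 : c₂ < c₂ + c₃ - x := by linarith
    have hy2 : c₂ + c₃ - x < c₃ := by linarith
    rw [Fc_mid h0 hc₁ hp hc₂ hc₃ hx2 hx3, Fc_mid h0 hc₁ hp hc₂ hc₃ hy1 hy2]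
    have hs0 : 0 < (c₃ - x) / (c₃ - c₂) := by apply div_pos <;> linarith
    have hs1 : (c₃ - x) / (c₃ - c₂) < 1 := by
      rw [div_lt_one (by linarith)]; linarith
    have heq : (c₃ - (c₂ + c₃ - x)) / (c₃ - c₂) = 1 - (c₃ - x) / (c₃ - c₂) := by
      rw [eq_sub_iff_add_eq, ← add_div,
        div_eq_one_iff_eq (by linarith : c₃ - c₂ ≠ 0)]
      ring
    rw [heq]
    exact hsym _ hs0 hs1
  · rw [Fc_of_ge h0 h23 hc₃0 hp hx3,
      Fc_left h0 h1 hsym hc₁ hp hc₂ hc₃ (by linarith) (by linarith)]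
    norm_num
end
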